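/- arXiv:1910.02865 — 3 statements merged into one kernel-verified Lean document; each statement's English description precedes it below -/
import Mathlib

section
/- Let u ∈ S^{d-1} and let a : ℝ → ℝ be such that ω ↦ a(ω·u) is σ-integrable on S^{d-1}. Write ⟨v,w⟩⊥ := v·w − (v·u)(w·u) for v, w ∈ ℝ^d. Then for all v₁, v₂, v₃, v₄ ∈ ℝ^d, ∫_{S^{d-1}} a(ω·u) (ω⊥·v₁)(ω⊥·v₂)(ω⊥·v₃)(ω⊥·v₄) dσ(ω) = (1/((d−1)(d+1))) · (∫_{S^{d-1}} a(ω·u)(1 − (ω·u)²)² dσ(ω)) · [⟨v₁,v₂⟩⊥⟨v₃,v₄⟩⊥ + ⟨v₁,v₃⟩⊥⟨v₂,v₄⟩⊥ + ⟨v₁,v₄⟩⊥⟨v₂,v₃⟩⊥]. -/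
open MeasureTheory Metric
open scoped RealInnerProductSpace

/-- The map induced on the unit sphere by a linear isometry of `EuclideanSpace ℝ (Fin d)`. -/
noncomputable def sphereRot {d : ℕ}
    (e : EuclideanSpace ℝ (Fin d) ≃ₗᵢ[ℝ] EuclideanSpace ℝ (Fin d))
    (ω : sphere (0 : EuclideanSpace ℝ (Fin d)) 1) :
    sphere (0 : EuclideanSpace ℝ (Fin d)) 1 :=
  ⟨e ω, by
    have hω := ω.2
    simp only [mem_sphere_iff_norm, sub_zero] at hω ⊢
    rw [e.norm_map]
    exact hω⟩

section Stmt3Aux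

variable {d : ℕ}

local notation "E" => EuclideanSpace ℝ (Fin d)
local notation "S" => sphere (0 : EuclideanSpace ℝ (Fin d)) (1:ℝ)

lemma norm_sph (ω : S) : ‖(ω : E)‖ = 1 := by
  have := ω.2
  rwa [mem_sphere_zero_iff_norm] at this

lemma cont_inner (v : E) : Continuous (fun ω : S => (⟪(ω:E), v⟫:ℝ)) :=
  Continuous.inner continuous_subtype_val continuous_const

lemma integ (σ : Measure S) (u : S) (a : ℝ → ℝ)
    (hint : Integrable (fun ω : S => a ⟪(ω:E), (u:E)⟫) σ)
    {g : S → ℝ} (hg : Continuous g) :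
    Integrable (fun ω : S => a ⟪(ω:E), (u:E)⟫ * g ω) σ := by
  obtain ⟨C, hC⟩ := isCompact_univ.exists_bound_of_continuousOn hg.continuousOn
  have h := hint.bdd_mul hg.aestronglyMeasurable (Filter.Eventually.of_forall fun x => hC x (Set.mem_univ x))
  exact h.congr (Filter.Eventually.of_forall fun x => mul_comm _ _)

lemma cov (σ : Measure S) (u : S) (a : ℝ → ℝ)
    (hint : Integrable (fun ω : S => a ⟪(ω:E), (u:E)⟫) σ)
    (e : E ≃ₗᵢ[ℝ] E) (hσe : σ.map (sphereRot e) = σ)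
    {g : S → ℝ} (hg : Continuous g) :
    ∫ (ω : S), a ⟪(ω:E), (u:E)⟫ * g ω ∂σ
      = ∫ (ω : S), a ⟪e ((ω:S):E), (u:E)⟫ * g (sphereRot e ω) ∂σ := by
  have hcont : Continuous (sphereRot e) :=
    Continuous.subtype_mk (e.continuous.comp continuous_subtype_val) _
  have hF : AEStronglyMeasurable (fun ω : S => a ⟪(ω:E), (u:E)⟫ * g ω) σ :=
    hint.aestronglyMeasurable.mul hg.aestronglyMeasurable
  calc ∫ (ω : S), a ⟪(ω:E), (u:E)⟫ * g ω ∂σ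
      = ∫ (ω : S), a ⟪(ω:E), (u:E)⟫ * g ω ∂(σ.map (sphereRot e)) := by rw [hσe]
    _ = ∫ (ω : S), a ⟪((sphereRot e ω):E), (u:E)⟫ * g (sphereRot e ω) ∂σ :=
        integral_map hcont.aemeasurable (by rw [hσe]; exact hF)
    _ = ∫ (ω : S), a ⟪e ((ω:S):E), (u:E)⟫ * g (sphereRot e ω) ∂σ := rfl

lemma basis_pair (hd : 2 ≤ d) {v w : E} (hv : ‖v‖ = 1) (hw : ‖w‖ = 1)
    (hvw : ⟪v, w⟫ = 0) :
    ∃ b : OrthonormalBasis (Fin d) ℝ E,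
      b ⟨0, by omega⟩ = v ∧ b ⟨1, by omega⟩ = w := by
  classical
  set z : Fin d := ⟨0, by omega⟩ with hz
  set o : Fin d := ⟨1, by omega⟩ with ho
  have hzo : z ≠ o := by simp [hz, ho, Fin.ext_iff]
  set p : Fin d → E := fun i => if i = z then v else w with hp
  have hpz : p z = v := if_pos rfl
  have hpo : p o = w := if_neg (Ne.symm hzo)
  have horth : Orthonormal ℝ (Set.restrict {z, o} p) := by
    rw [orthonormal_iff_ite]
    rintro ⟨i, hi⟩ ⟨j, hj⟩
    simp only [Set.mem_insert_iff, Set.mem_singleton_iff] at hi hj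
    rcases hi with rfl | rfl <;> rcases hj with rfl | rfl
    · rw [if_pos rfl]
      show ⟪p z, p z⟫ = 1
      rw [hpz, real_inner_self_eq_norm_sq, hv]; norm_num
    · rw [if_neg (fun h => hzo (congrArg Subtype.val h))]
      show ⟪p z, p o⟫ = 0
      rw [hpz, hpo]; exact hvw
    · rw [if_neg (fun h => hzo (congrArg Subtype.val h).symm)]
      show ⟪p o, p z⟫ = 0
      rw [hpz, hpo, real_inner_comm]; exact hvw
    · rw [if_pos rfl]
      show ⟪p o, p o⟫ = 1
      rw [hpo, real_inner_self_eq_norm_sq, hw]; norm_num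
  have hcard : Module.finrank ℝ E = Fintype.card (Fin d) := by
    simp [finrank_euclideanSpace_fin]
  obtain ⟨b, hb⟩ := horth.exists_orthonormalBasis_extension_of_card_eq hcard
  refine ⟨b, ?_, ?_⟩
  · rw [hb z (by simp), hpz]
  · rw [hb o (by simp), hpo]

lemma basis_single (hd : 2 ≤ d) {v : E} (hv : ‖v‖ = 1) :
    ∃ b : OrthonormalBasis (Fin d) ℝ E, b ⟨0, by omega⟩ = v := by
  classical
  set z : Fin d := ⟨0, by omega⟩ with hz
  have horth : Orthonormal ℝ (Set.restrict {z} (fun _ : Fin d => v)) := by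
    rw [orthonormal_iff_ite]
    rintro ⟨i, hi⟩ ⟨j, hj⟩
    simp only [Set.mem_singleton_iff] at hi hj
    subst hi; subst hj
    rw [if_pos rfl]
    show ⟪v, v⟫ = 1
    rw [real_inner_self_eq_norm_sq, hv]; norm_num
  have hcard : Module.finrank ℝ E = Fintype.card (Fin d) := by
    simp [finrank_euclideanSpace_fin]
  obtain ⟨b, hb⟩ := horth.exists_orthonormalBasis_extension_of_card_eq hcard
  exact ⟨b, hb z (by simp)⟩

lemma aux_main (hd : 2 ≤ d) (σ : Measure S) [IsProbabilityMeasure σ]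
    (hσ : ∀ e : E ≃ₗᵢ[ℝ] E, σ.map (sphereRot e) = σ)
    (u : S) (a : ℝ → ℝ)
    (hint : Integrable (fun ω : S => a ⟪(ω:E), (u:E)⟫) σ)
    (p₁ p₂ p₃ p₄ : E)
    (hp₁ : ⟪(u:E), p₁⟫ = 0) (hp₂ : ⟪(u:E), p₂⟫ = 0)
    (hp₃ : ⟪(u:E), p₃⟫ = 0) (hp₄ : ⟪(u:E), p₄⟫ = 0) :
    ∫ (ω : S), a ⟪(ω:E), (u:E)⟫ * (⟪(ω:E), p₁⟫ * ⟪(ω:E), p₂⟫ * ⟪(ω:E), p₃⟫ * ⟪(ω:E), p₄⟫) ∂σ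
      = (1 / (((d : ℝ) - 1) * ((d : ℝ) + 1))) *
        (∫ (ω : S), a ⟪(ω:E), (u:E)⟫ * (1 - ⟪(ω:E), (u:E)⟫ ^ 2) ^ 2 ∂σ) *
        (⟪p₁,p₂⟫ * ⟪p₃,p₄⟫ + ⟪p₁,p₃⟫ * ⟪p₂,p₄⟫ + ⟪p₁,p₄⟫ * ⟪p₂,p₃⟫) := by
  classical
  have hnu : ‖(u:E)‖ = 1 := norm_sph u
  have hQint : ∀ v : E, Integrable (fun ω : S => a ⟪(ω:E),(u:E)⟫ * ⟪(ω:E),v⟫^4) σ :=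
    fun v => integ σ u a hint ((cont_inner v).pow 4)
  have hMint : ∀ q r : E,
      Integrable (fun ω : S => a ⟪(ω:E),(u:E)⟫ * (⟪(ω:E),q⟫^2 * ⟪(ω:E),r⟫^2)) σ :=
    fun q r => integ σ u a hint (((cont_inner q).pow 2).mul ((cont_inner r).pow 2))
  have hQrot : ∀ (e : E ≃ₗᵢ[ℝ] E), e (u:E) = (u:E) → ∀ v : E,
      ∫ (ω : S), a ⟪(ω:E),(u:E)⟫ * ⟪(ω:E), e v⟫^4 ∂σ
        = ∫ (ω : S), a ⟪(ω:E),(u:E)⟫ * ⟪(ω:E), v⟫^4 ∂σ := by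
    intro e he v
    rw [cov (g := fun ω : S => ⟪(ω:E), e v⟫^4) σ u a hint e (hσ e) ((cont_inner (e v)).pow 4)]
    refine integral_congr_ae (Filter.Eventually.of_forall fun ω => ?_)
    show a ⟪e ((ω:S):E), (u:E)⟫ * ⟪((sphereRot e ω):E), e v⟫^4
        = a ⟪(ω:E),(u:E)⟫ * ⟪(ω:E), v⟫^4
    have hc : ((sphereRot e ω):E) = e ((ω:S):E) := rfl
    rw [hc]
    conv_lhs => rw [← he]
    rw [e.inner_map_map, e.inner_map_map]
  have hQsmul : ∀ (t : ℝ) (v : E),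
      ∫ (ω : S), a ⟪(ω:E),(u:E)⟫ * ⟪(ω:E), t • v⟫^4 ∂σ
        = t^4 * ∫ (ω : S), a ⟪(ω:E),(u:E)⟫ * ⟪(ω:E), v⟫^4 ∂σ := by
    intro t v
    rw [← integral_const_mul]
    refine integral_congr_ae (Filter.Eventually.of_forall fun ω => ?_)
    show a ⟪(ω:E),(u:E)⟫ * ⟪(ω:E), t • v⟫^4
        = t^4 * (a ⟪(ω:E),(u:E)⟫ * ⟪(ω:E), v⟫^4)
    rw [real_inner_smul_right]; ring
  obtain ⟨b, hb0⟩ := basis_single (v := (u:E)) hd hnu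
  set z : Fin d := ⟨0, by omega⟩ with hz
  set o : Fin d := ⟨1, by omega⟩ with ho
  have hb0z : b z = (u:E) := hb0
  have horthb := orthonormal_iff_ite.mp b.orthonormal
  have hnb : ∀ i, ‖b i‖ = 1 := b.orthonormal.1
  have hbu : ∀ i : Fin d, i ≠ z → ⟪(u:E), b i⟫ = 0 := by
    intro i hi
    have h := horthb z i
    rw [if_neg (Ne.symm hi)] at h
    rw [← hb0z]
    exact h
  set c : ℝ := ∫ (ω : S), a ⟪(ω:E),(u:E)⟫ * ⟪(ω:E), b o⟫^4 ∂σ with hcdef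
  have hQc : ∀ v : E, ⟪(u:E), v⟫ = 0 →
      ∫ (ω : S), a ⟪(ω:E),(u:E)⟫ * ⟪(ω:E), v⟫^4 ∂σ = c * ‖v‖^4 := by
    intro v hv
    rcases eq_or_ne v 0 with rfl | hvne
    · simp
    · have ht : ‖v‖ ≠ 0 := norm_ne_zero_iff.mpr hvne
      set v' : E := ‖v‖⁻¹ • v with hv'def
      have hvnorm : ‖v'‖ = 1 := by
        rw [hv'def, norm_smul, norm_inv, norm_norm, inv_mul_cancel₀ ht]
      have huv' : ⟪(u:E), v'⟫ = 0 := by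
        rw [hv'def, real_inner_smul_right, hv, mul_zero]
      obtain ⟨b', hb'0, hb'1⟩ := basis_pair hd hnu hvnorm huv'
      have hb'0z : b' z = (u:E) := hb'0
      have hb'1o : b' o = v' := hb'1
      set e : E ≃ₗᵢ[ℝ] E := b.repr.trans b'.repr.symm with hedef
      have he : ∀ i, e (b i) = b' i := by
        intro i
        rw [hedef]
        simp only [LinearIsometryEquiv.trans_apply]
        rw [b.repr_self, ← b'.repr_self, b'.repr.symm_apply_apply]
      have heu : e (u:E) = (u:E) := by
        rw [← hb0z, he z, hb'0z, hb0z]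
      have hQv' : ∫ (ω : S), a ⟪(ω:E),(u:E)⟫ * ⟪(ω:E), v'⟫^4 ∂σ = c := by
        have h1 : v' = e (b o) := ((he o).trans hb'1o).symm
        rw [h1, hQrot e heu (b o)]
      have hvv : v = ‖v‖ • v' := by rw [hv'def, smul_inv_smul₀ ht]
      calc ∫ (ω : S), a ⟪(ω:E),(u:E)⟫ * ⟪(ω:E), v⟫^4 ∂σ
          = ∫ (ω : S), a ⟪(ω:E),(u:E)⟫ * ⟪(ω:E), ‖v‖ • v'⟫^4 ∂σ := by rw [← hvv]
        _ = ‖v‖^4 * ∫ (ω : S), a ⟪(ω:E),(u:E)⟫ * ⟪(ω:E), v'⟫^4 ∂σ := hQsmul ‖v‖ v'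
        _ = c * ‖v‖^4 := by rw [hQv']; ring
  have hM : ∀ q r : E, ⟪(u:E),q⟫ = 0 → ⟪(u:E),r⟫ = 0 →
      ∫ (ω : S), a ⟪(ω:E),(u:E)⟫ * (⟪(ω:E),q⟫^2 * ⟪(ω:E),r⟫^2) ∂σ
        = c/3 * (‖q‖^2 * ‖r‖^2 + 2 * ⟪q,r⟫^2) := by
    intro q r hq hr
    have hfun : (fun ω : S => a ⟪(ω:E),(u:E)⟫ * (⟪(ω:E),q⟫^2 * ⟪(ω:E),r⟫^2))
        = fun ω : S => (1/12) *
            ((a ⟪(ω:E),(u:E)⟫ * ⟪(ω:E), q + r⟫^4 + a ⟪(ω:E),(u:E)⟫ * ⟪(ω:E), q - r⟫^4)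
              - (2 * (a ⟪(ω:E),(u:E)⟫ * ⟪(ω:E), q⟫^4) + 2 * (a ⟪(ω:E),(u:E)⟫ * ⟪(ω:E), r⟫^4))) := by
      funext ω
      simp only [inner_add_right, inner_sub_right]
      ring
    have IA := hQint (q+r)
    have IB := hQint (q-r)
    have IC : Integrable (fun ω : S => 2 * (a ⟪(ω:E),(u:E)⟫ * ⟪(ω:E), q⟫^4)) σ :=
      (hQint q).const_mul 2
    have ID : Integrable (fun ω : S => 2 * (a ⟪(ω:E),(u:E)⟫ * ⟪(ω:E), r⟫^4)) σ :=
      (hQint r).const_mul 2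
    have IAB : Integrable (fun ω : S => a ⟪(ω:E),(u:E)⟫ * ⟪(ω:E), q + r⟫^4
        + a ⟪(ω:E),(u:E)⟫ * ⟪(ω:E), q - r⟫^4) σ := IA.add IB
    have ICD : Integrable (fun ω : S => 2 * (a ⟪(ω:E),(u:E)⟫ * ⟪(ω:E), q⟫^4)
        + 2 * (a ⟪(ω:E),(u:E)⟫ * ⟪(ω:E), r⟫^4)) σ := IC.add ID
    rw [hfun, integral_const_mul,
      integral_sub IAB ICD,
      integral_add IA IB,
      integral_add IC ID,
      integral_const_mul, integral_const_mul,
      hQc (q+r) (by rw [inner_add_right, hq, hr]; norm_num),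
      hQc (q-r) (by rw [inner_sub_right, hq, hr]; norm_num),
      hQc q hq, hQc r hr]
    have h1 : ‖q+r‖^4 = (‖q‖^2 + 2*⟪q,r⟫ + ‖r‖^2)^2 := by
      rw [show (4:ℕ) = 2*2 from rfl, pow_mul, norm_add_sq_real]
    have h2 : ‖q-r‖^4 = (‖q‖^2 - 2*⟪q,r⟫ + ‖r‖^2)^2 := by
      rw [show (4:ℕ) = 2*2 from rfl, pow_mul, norm_sub_sq_real]
    have h3 : ‖q‖^4 = (‖q‖^2)^2 := by ring
    have h4 : ‖r‖^4 = (‖r‖^2)^2 := by ring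
    rw [h1, h2, h3, h4]; ring
  -- Parseval
  have hpar : ∀ ω : S, 1 - ⟪(ω:E),(u:E)⟫^2 = ∑ i ∈ Finset.univ.erase z, ⟪(ω:E), b i⟫^2 := by
    intro ω
    have h := b.sum_inner_mul_inner (ω:E) (ω:E)
    have h1 : (⟪(ω:E),(ω:E)⟫:ℝ) = 1 := by
      rw [real_inner_self_eq_norm_sq, norm_sph ω]; norm_num
    have hsum : ∑ i : Fin d, (⟪(ω:E), b i⟫:ℝ)^2 = 1 := by
      calc ∑ i : Fin d, (⟪(ω:E), b i⟫:ℝ)^2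
          = ∑ i : Fin d, (⟪(ω:E), b i⟫:ℝ) * ⟪b i, (ω:E)⟫ :=
            Finset.sum_congr rfl fun i _ => by
              rw [real_inner_comm (b i) ((ω:E)), pow_two]
        _ = ⟪(ω:E),(ω:E)⟫ := h
        _ = 1 := h1
    have hsplit := Finset.add_sum_erase Finset.univ
      (fun i => (⟪(ω:E), b i⟫:ℝ)^2) (Finset.mem_univ z)
    beta_reduce at hsplit
    rw [hsum, hb0z] at hsplit
    linarith [hsplit]
  set s : Finset (Fin d) := Finset.univ.erase z with hsdef
  have hscard : s.card = d - 1 := by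
    rw [hsdef, Finset.card_erase_of_mem (Finset.mem_univ z), Finset.card_univ,
      Fintype.card_fin]
  have hfun2 : (fun ω : S => a ⟪(ω:E),(u:E)⟫ * (1 - ⟪(ω:E),(u:E)⟫^2)^2)
      = fun ω : S => ∑ i ∈ s, ∑ j ∈ s,
          a ⟪(ω:E),(u:E)⟫ * (⟪(ω:E), b i⟫^2 * ⟪(ω:E), b j⟫^2) := by
    funext ω
    rw [hpar ω, sq, Finset.sum_mul_sum]
    simp only [Finset.mul_sum]

  have hIsum : ∫ (ω : S), a ⟪(ω:E),(u:E)⟫ * (1 - ⟪(ω:E),(u:E)⟫^2)^2 ∂σ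
      = ∑ i ∈ s, ∑ j ∈ s, (if i = j then c else c/3) := by
    rw [hfun2, integral_finset_sum s
      (fun i _ => integrable_finset_sum s (fun j _ => hMint (b i) (b j)))]
    refine Finset.sum_congr rfl fun i hi => ?_
    rw [integral_finset_sum s (fun j _ => hMint (b i) (b j))]
    refine Finset.sum_congr rfl fun j hj => ?_
    have hi0 : i ≠ z := Finset.ne_of_mem_erase hi
    have hj0 : j ≠ z := Finset.ne_of_mem_erase hj
    by_cases hij : i = j
    · subst hij
      rw [if_pos rfl]
      have hfn : (fun ω : S => a ⟪(ω:E),(u:E)⟫ * (⟪(ω:E), b i⟫^2 * ⟪(ω:E), b i⟫^2))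
          = fun ω : S => a ⟪(ω:E),(u:E)⟫ * ⟪(ω:E), b i⟫^4 := by
        funext ω; ring
      rw [hfn, hQc (b i) (hbu i hi0), hnb i]; norm_num
    · rw [if_neg hij, hM (b i) (b j) (hbu i hi0) (hbu j hj0)]
      have hbij : (⟪b i, b j⟫:ℝ) = 0 := by
        have h := horthb i j; rwa [if_neg hij] at h
      rw [hbij, hnb i, hnb j]; norm_num
  have hIval : ∫ (ω : S), a ⟪(ω:E),(u:E)⟫ * (1 - ⟪(ω:E),(u:E)⟫^2)^2 ∂σ
      = ((d:ℝ)-1) * ((d:ℝ)+1) * c / 3 := by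
    rw [hIsum]
    have hrow : ∀ i ∈ s, (∑ j ∈ s, if i = j then c else c/3)
        = c + ((d:ℝ)-2) * (c/3) := by
      intro i hi
      rw [← Finset.add_sum_erase s (fun j => if i = j then c else c/3) hi]
      rw [if_pos rfl]
      congr 1
      rw [Finset.sum_congr rfl
        (fun j hj => if_neg (fun h => Finset.ne_of_mem_erase hj h.symm)),
        Finset.sum_const, Finset.card_erase_of_mem hi, hscard, nsmul_eq_mul]
      congr 1
      rw [show d - 1 - 1 = d - 2 from by omega, Nat.cast_sub hd]
      norm_num
    rw [Finset.sum_congr rfl hrow, Finset.sum_const, hscard, nsmul_eq_mul,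
      Nat.cast_sub (by omega : 1 ≤ d), Nat.cast_one]
    ring
  -- final polarization
  have hs12 : ⟪(u:E), p₁ + p₂⟫ = 0 := by rw [inner_add_right, hp₁, hp₂]; norm_num
  have hd12 : ⟪(u:E), p₁ - p₂⟫ = 0 := by rw [inner_sub_right, hp₁, hp₂]; norm_num
  have hs34 : ⟪(u:E), p₃ + p₄⟫ = 0 := by rw [inner_add_right, hp₃, hp₄]; norm_num
  have hd34 : ⟪(u:E), p₃ - p₄⟫ = 0 := by rw [inner_sub_right, hp₃, hp₄]; norm_num
  have hfun3 : (fun ω : S => a ⟪(ω:E),(u:E)⟫ *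
        (⟪(ω:E), p₁⟫ * ⟪(ω:E), p₂⟫ * ⟪(ω:E), p₃⟫ * ⟪(ω:E), p₄⟫))
      = fun ω : S => (1/16) *
          (((a ⟪(ω:E),(u:E)⟫ * (⟪(ω:E), p₁ + p₂⟫^2 * ⟪(ω:E), p₃ + p₄⟫^2)
            - a ⟪(ω:E),(u:E)⟫ * (⟪(ω:E), p₁ + p₂⟫^2 * ⟪(ω:E), p₃ - p₄⟫^2))
            - a ⟪(ω:E),(u:E)⟫ * (⟪(ω:E), p₁ - p₂⟫^2 * ⟪(ω:E), p₃ + p₄⟫^2))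
            + a ⟪(ω:E),(u:E)⟫ * (⟪(ω:E), p₁ - p₂⟫^2 * ⟪(ω:E), p₃ - p₄⟫^2)) := by
    funext ω
    simp only [inner_add_right, inner_sub_right]
    ring
  have J1 := hMint (p₁+p₂) (p₃+p₄)
  have J2 := hMint (p₁+p₂) (p₃-p₄)
  have J3 := hMint (p₁-p₂) (p₃+p₄)
  have J4 := hMint (p₁-p₂) (p₃-p₄)
  have J12 : Integrable (fun ω : S =>
      a ⟪(ω:E),(u:E)⟫ * (⟪(ω:E), p₁ + p₂⟫^2 * ⟪(ω:E), p₃ + p₄⟫^2)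
      - a ⟪(ω:E),(u:E)⟫ * (⟪(ω:E), p₁ + p₂⟫^2 * ⟪(ω:E), p₃ - p₄⟫^2)) σ := J1.sub J2
  have J123 : Integrable (fun ω : S =>
      a ⟪(ω:E),(u:E)⟫ * (⟪(ω:E), p₁ + p₂⟫^2 * ⟪(ω:E), p₃ + p₄⟫^2)
      - a ⟪(ω:E),(u:E)⟫ * (⟪(ω:E), p₁ + p₂⟫^2 * ⟪(ω:E), p₃ - p₄⟫^2)
      - a ⟪(ω:E),(u:E)⟫ * (⟪(ω:E), p₁ - p₂⟫^2 * ⟪(ω:E), p₃ + p₄⟫^2)) σ := J12.sub J3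
  rw [hfun3, integral_const_mul,
    integral_add J123 J4,
    integral_sub J12 J3,
    integral_sub J1 J2,
    hM (p₁+p₂) (p₃+p₄) hs12 hs34, hM (p₁+p₂) (p₃-p₄) hs12 hd34,
    hM (p₁-p₂) (p₃+p₄) hd12 hs34, hM (p₁-p₂) (p₃-p₄) hd12 hd34, hIval,
    norm_add_sq_real p₁ p₂, norm_add_sq_real p₃ p₄,
    norm_sub_sq_real p₁ p₂, norm_sub_sq_real p₃ p₄]
  simp only [inner_add_left, inner_add_right, inner_sub_left, inner_sub_right]
  have hX : (((d:ℝ)-1) * ((d:ℝ)+1)) ≠ 0 := by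
    have h2 : (2:ℝ) ≤ (d:ℝ) := by exact_mod_cast hd
    have hpos : (0:ℝ) < ((d:ℝ)-1) * ((d:ℝ)+1) := by nlinarith
    exact ne_of_gt hpos
  have hX1 : ((d:ℝ)-1) ≠ 0 := left_ne_zero_of_mul hX
  have hX2 : ((d:ℝ)+1) ≠ 0 := right_ne_zero_of_mul hX
  field_simp
  ring

end Stmt3Aux

/-- the fourth moment of `ω⊥`:
`∫ a(ω·u)(ω⊥·v₁)(ω⊥·v₂)(ω⊥·v₃)(ω⊥·v₄) dσ
  = (1/((d−1)(d+1))) (∫ a(ω·u)(1−(ω·u)²)² dσ)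
    (⟨v₁,v₂⟩⊥⟨v₃,v₄⟩⊥ + ⟨v₁,v₃⟩⊥⟨v₂,v₄⟩⊥ + ⟨v₁,v₄⟩⊥⟨v₂,v₃⟩⊥)`,
where `⟨v,w⟩⊥ = v·w − (v·u)(w·u)` and `ω⊥ = ω − (ω·u)u`. -/
theorem stmt3 (d : ℕ) (hd : 2 ≤ d)
    (σ : Measure (sphere (0 : EuclideanSpace ℝ (Fin d)) 1))
    [IsProbabilityMeasure σ]
    (hσ : ∀ e : EuclideanSpace ℝ (Fin d) ≃ₗᵢ[ℝ] EuclideanSpace ℝ (Fin d),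
      σ.map (sphereRot e) = σ)
    (u : sphere (0 : EuclideanSpace ℝ (Fin d)) 1)
    (a : ℝ → ℝ)
    (hint : Integrable (fun ω : sphere (0 : EuclideanSpace ℝ (Fin d)) 1 =>
      a ⟪(ω : EuclideanSpace ℝ (Fin d)), (u : EuclideanSpace ℝ (Fin d))⟫) σ)
    (perp : sphere (0 : EuclideanSpace ℝ (Fin d)) 1 → EuclideanSpace ℝ (Fin d))
    (hperp : ∀ ω : sphere (0 : EuclideanSpace ℝ (Fin d)) 1,
      perp ω = (ω : EuclideanSpace ℝ (Fin d)) -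
        ⟪(ω : EuclideanSpace ℝ (Fin d)), (u : EuclideanSpace ℝ (Fin d))⟫ •
          (u : EuclideanSpace ℝ (Fin d)))
    (ip : EuclideanSpace ℝ (Fin d) → EuclideanSpace ℝ (Fin d) → ℝ)
    (hip : ∀ v w : EuclideanSpace ℝ (Fin d),
      ip v w = ⟪v, w⟫ - ⟪v, (u : EuclideanSpace ℝ (Fin d))⟫ * ⟪w, (u : EuclideanSpace ℝ (Fin d))⟫)
    (v₁ v₂ v₃ v₄ : EuclideanSpace ℝ (Fin d)) :
    ∫ ω, a ⟪(ω : EuclideanSpace ℝ (Fin d)), (u : EuclideanSpace ℝ (Fin d))⟫ *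
        ⟪perp ω, v₁⟫ * ⟪perp ω, v₂⟫ * ⟪perp ω, v₃⟫ * ⟪perp ω, v₄⟫ ∂σ
      = (1 / (((d : ℝ) - 1) * ((d : ℝ) + 1))) *
          (∫ ω, a ⟪(ω : EuclideanSpace ℝ (Fin d)), (u : EuclideanSpace ℝ (Fin d))⟫ *
            (1 - ⟪(ω : EuclideanSpace ℝ (Fin d)), (u : EuclideanSpace ℝ (Fin d))⟫ ^ 2) ^ 2 ∂σ) *
          (ip v₁ v₂ * ip v₃ v₄ + ip v₁ v₃ * ip v₂ v₄ + ip v₁ v₄ * ip v₂ v₃) := by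
  have hnu : ‖(u : EuclideanSpace ℝ (Fin d))‖ = 1 := norm_sph u
  have huu : ⟪(u : EuclideanSpace ℝ (Fin d)), (u : EuclideanSpace ℝ (Fin d))⟫ = (1:ℝ) := by
    rw [real_inner_self_eq_norm_sq, hnu]; norm_num
  have hq : ∀ v : EuclideanSpace ℝ (Fin d),
      ⟪(u : EuclideanSpace ℝ (Fin d)),
        v - ⟪v, (u : EuclideanSpace ℝ (Fin d))⟫ • (u : EuclideanSpace ℝ (Fin d))⟫ = 0 := by
    intro v
    rw [inner_sub_right, real_inner_smul_right, huu, mul_one,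
      real_inner_comm (u : EuclideanSpace ℝ (Fin d)) v, sub_self]
  have hperp_inner : ∀ (ω : sphere (0 : EuclideanSpace ℝ (Fin d)) 1)
      (v : EuclideanSpace ℝ (Fin d)),
      ⟪perp ω, v⟫ = ⟪(ω : EuclideanSpace ℝ (Fin d)),
        v - ⟪v, (u : EuclideanSpace ℝ (Fin d))⟫ • (u : EuclideanSpace ℝ (Fin d))⟫ := by
    intro ω v
    rw [hperp ω, inner_sub_left, inner_sub_right, real_inner_smul_left,
      real_inner_smul_right, real_inner_comm (u : EuclideanSpace ℝ (Fin d)) v]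
    ring
  have hip_inner : ∀ v w : EuclideanSpace ℝ (Fin d),
      ip v w = ⟪v - ⟪v, (u : EuclideanSpace ℝ (Fin d))⟫ • (u : EuclideanSpace ℝ (Fin d)),
        w - ⟪w, (u : EuclideanSpace ℝ (Fin d))⟫ • (u : EuclideanSpace ℝ (Fin d))⟫ := by
    intro v w
    rw [hip v w, inner_sub_left, inner_sub_right, inner_sub_right,
      real_inner_smul_left, real_inner_smul_right, real_inner_smul_left,
      real_inner_smul_right, huu, real_inner_comm (u : EuclideanSpace ℝ (Fin d)) w]
    ring
  have key := aux_main hd σ hσ u a hint _ _ _ _ (hq v₁) (hq v₂) (hq v₃) (hq v₄)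
  calc ∫ ω, a ⟪(ω : EuclideanSpace ℝ (Fin d)), (u : EuclideanSpace ℝ (Fin d))⟫ *
        ⟪perp ω, v₁⟫ * ⟪perp ω, v₂⟫ * ⟪perp ω, v₃⟫ * ⟪perp ω, v₄⟫ ∂σ
      = ∫ (ω : sphere (0 : EuclideanSpace ℝ (Fin d)) 1),
          a ⟪(ω : EuclideanSpace ℝ (Fin d)), (u : EuclideanSpace ℝ (Fin d))⟫ *
          (⟪(ω : EuclideanSpace ℝ (Fin d)),
              v₁ - ⟪v₁, (u : EuclideanSpace ℝ (Fin d))⟫ • (u : EuclideanSpace ℝ (Fin d))⟫ *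
            ⟪(ω : EuclideanSpace ℝ (Fin d)),
              v₂ - ⟪v₂, (u : EuclideanSpace ℝ (Fin d))⟫ • (u : EuclideanSpace ℝ (Fin d))⟫ *
            ⟪(ω : EuclideanSpace ℝ (Fin d)),
              v₃ - ⟪v₃, (u : EuclideanSpace ℝ (Fin d))⟫ • (u : EuclideanSpace ℝ (Fin d))⟫ *
            ⟪(ω : EuclideanSpace ℝ (Fin d)),
              v₄ - ⟪v₄, (u : EuclideanSpace ℝ (Fin d))⟫ • (u : EuclideanSpace ℝ (Fin d))⟫) ∂σ := by
        refine integral_congr_ae (Filter.Eventually.of_forall fun ω => ?_)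
        beta_reduce
        rw [hperp_inner ω v₁, hperp_inner ω v₂, hperp_inner ω v₃, hperp_inner ω v₄]
        ring
    _ = (1 / (((d : ℝ) - 1) * ((d : ℝ) + 1))) *
          (∫ ω, a ⟪(ω : EuclideanSpace ℝ (Fin d)), (u : EuclideanSpace ℝ (Fin d))⟫ *
            (1 - ⟪(ω : EuclideanSpace ℝ (Fin d)), (u : EuclideanSpace ℝ (Fin d))⟫ ^ 2) ^ 2 ∂σ) *
          (ip v₁ v₂ * ip v₃ v₄ + ip v₁ v₃ * ip v₂ v₄ + ip v₁ v₄ * ip v₂ v₃) := by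
        rw [hip_inner v₁ v₂, hip_inner v₃ v₄, hip_inner v₁ v₃, hip_inner v₂ v₄,
          hip_inner v₁ v₄, hip_inner v₂ v₃]
        exact key
end

section
/- Let κ > 0 and u ∈ S^{d-1}, and let Q_{M_u} be the d×d matrix Q_{M_u} = ∫_{S^{d-1}} M_u(ω) (ω⊗ω − (1/d)·Id) dσ(ω). Set λ∥ = ∫_{S^{d-1}} M_u(ω)(ω·u)² dσ(ω) − 1/d. Then u is an eigenvector of Q_{M_u} with eigenvalue λ∥ (i.e. Q_{M_u} u = λ∥ u), and every ξ ∈ ℝ^d with ξ·u = 0 is an eigenvector of Q_{M_u} with eigenvalue λ⊥ = −λ∥/(d−1) (i.e. Q_{M_u} ξ = −(λ∥/(d−1)) ξ). -/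
open MeasureTheory Metric
open scoped RealInnerProductSpace

private lemma contInt {d : ℕ} {σ : Measure (sphere (0 : EuclideanSpace ℝ (Fin d)) 1)}
    [IsProbabilityMeasure σ] {g : sphere (0 : EuclideanSpace ℝ (Fin d)) 1 → ℝ}
    (hg : Continuous g) : Integrable g σ :=
  hg.integrable_of_hasCompactSupport (HasCompactSupport.of_compactSpace g)

private lemma integral_rot {d : ℕ} {σ : Measure (sphere (0 : EuclideanSpace ℝ (Fin d)) 1)}
    [IsProbabilityMeasure σ]
    (hσ : ∀ e : EuclideanSpace ℝ (Fin d) ≃ₗᵢ[ℝ] EuclideanSpace ℝ (Fin d), σ.map (sphereRot e) = σ)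
    (e : EuclideanSpace ℝ (Fin d) ≃ₗᵢ[ℝ] EuclideanSpace ℝ (Fin d))
    {f : sphere (0 : EuclideanSpace ℝ (Fin d)) 1 → ℝ} (hf : Continuous f) :
    ∫ ω, f ω ∂σ = ∫ ω, f (sphereRot e ω) ∂σ := by
  have hφ : AEMeasurable (sphereRot e) σ :=
    (Continuous.subtype_mk (e.continuous.comp continuous_subtype_val) _).aemeasurable
  have hfm : AEStronglyMeasurable f (σ.map (sphereRot e)) := by
    rw [hσ e]; exact hf.aestronglyMeasurable
  conv_lhs => rw [← hσ e]
  exact integral_map hφ hfm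

/-- for the nematic equilibrium `M_u`, the Q-tensor
`Q_{M_u} = ∫ M_u (ω⊗ω − Id/d) dσ` has `u` as eigenvector with eigenvalue
`λ∥ = ∫ M_u (ω·u)² dσ − 1/d`, and every `ξ ⊥ u` as eigenvector with eigenvalue
`λ⊥ = −λ∥/(d−1)`. -/
theorem stmt4 (d : ℕ) (hd : 2 ≤ d)
    (σ : Measure (sphere (0 : EuclideanSpace ℝ (Fin d)) 1))
    [IsProbabilityMeasure σ]
    (hσ : ∀ e : EuclideanSpace ℝ (Fin d) ≃ₗᵢ[ℝ] EuclideanSpace ℝ (Fin d),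
      σ.map (sphereRot e) = σ)
    (κ : ℝ) (hκ : 0 < κ)
    (u : sphere (0 : EuclideanSpace ℝ (Fin d)) 1)
    (Z : ℝ)
    (hZ : Z = ∫ ω, Real.exp (κ / 2 *
        ⟪(ω : EuclideanSpace ℝ (Fin d)), (u : EuclideanSpace ℝ (Fin d))⟫ ^ 2) ∂σ)
    (M : sphere (0 : EuclideanSpace ℝ (Fin d)) 1 → ℝ)
    (hM : ∀ ω, M ω = Real.exp (κ / 2 *
        ⟪(ω : EuclideanSpace ℝ (Fin d)), (u : EuclideanSpace ℝ (Fin d))⟫ ^ 2) / Z)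
    (Q : Matrix (Fin d) (Fin d) ℝ)
    (hQ : ∀ i j, Q i j = ∫ ω, M ω *
        ((ω : EuclideanSpace ℝ (Fin d)) i * (ω : EuclideanSpace ℝ (Fin d)) j -
          (if i = j then 1 / (d : ℝ) else 0)) ∂σ)
    (lampar : ℝ)
    (hlam : lampar = (∫ ω, M ω *
        ⟪(ω : EuclideanSpace ℝ (Fin d)), (u : EuclideanSpace ℝ (Fin d))⟫ ^ 2 ∂σ) - 1 / (d : ℝ)) :
    (∀ i, (∑ j, Q i j * (u : EuclideanSpace ℝ (Fin d)) j)
        = lampar * (u : EuclideanSpace ℝ (Fin d)) i) ∧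
    (∀ ξ : EuclideanSpace ℝ (Fin d), ⟪ξ, (u : EuclideanSpace ℝ (Fin d))⟫ = 0 →
      ∀ i, (∑ j, Q i j * ξ j) = -(lampar / ((d : ℝ) - 1)) * ξ i) := by
  classical
  -- basic facts
  have hinner : ∀ x y : EuclideanSpace ℝ (Fin d), ⟪x, y⟫ = ∑ j, x j * y j := by
    intro x y; simp [PiLp.inner_apply, RCLike.inner_apply, conj_trivial, mul_comm]
  have hcoordR : ∀ (x : EuclideanSpace ℝ (Fin d)) i, ⟪x, EuclideanSpace.single i (1:ℝ)⟫ = x i := by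
    intro x i; rw [EuclideanSpace.inner_single_right]; simp
  have hcoordL : ∀ (x : EuclideanSpace ℝ (Fin d)) i, ⟪EuclideanSpace.single i (1:ℝ), x⟫ = x i := by
    intro x i; rw [EuclideanSpace.inner_single_left]; simp
  have hunorm : ‖(u : EuclideanSpace ℝ (Fin d))‖ = 1 := by
    have := u.2; simp only [mem_sphere_iff_norm, sub_zero] at this; exact this
  have huu : ⟪(u : EuclideanSpace ℝ (Fin d)), (u : EuclideanSpace ℝ (Fin d))⟫ = 1 := by
    rw [real_inner_self_eq_norm_mul_norm, hunorm]; norm_num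
  have hune : (u : EuclideanSpace ℝ (Fin d)) ≠ 0 := by
    intro h; rw [h, norm_zero] at hunorm; norm_num at hunorm
  -- continuity of M
  have hinnc : Continuous (fun ω : sphere (0 : EuclideanSpace ℝ (Fin d)) 1 => ⟪(ω : EuclideanSpace ℝ (Fin d)), (u : EuclideanSpace ℝ (Fin d))⟫) :=
    continuous_subtype_val.inner continuous_const
  have hMc : Continuous M := by
    have hMe : M = fun ω : sphere (0 : EuclideanSpace ℝ (Fin d)) 1 => Real.exp (κ / 2 * ⟪(ω : EuclideanSpace ℝ (Fin d)), (u : EuclideanSpace ℝ (Fin d))⟫ ^ 2) / Z :=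
      funext hM
    rw [hMe]
    exact (Real.continuous_exp.comp (continuous_const.mul (hinnc.pow 2))).div_const Z
  have hcont : ∀ v w : EuclideanSpace ℝ (Fin d), Continuous
      (fun ω : sphere (0 : EuclideanSpace ℝ (Fin d)) 1 => M ω * (⟪(ω : EuclideanSpace ℝ (Fin d)), v⟫ * ⟪(ω : EuclideanSpace ℝ (Fin d)), w⟫)) := by
    intro v w
    exact hMc.mul ((continuous_subtype_val.inner continuous_const).mul
      (continuous_subtype_val.inner continuous_const))
  have hint : ∀ v w : EuclideanSpace ℝ (Fin d), Integrable (fun ω : sphere (0 : EuclideanSpace ℝ (Fin d)) 1 => M ω * (⟪(ω : EuclideanSpace ℝ (Fin d)), v⟫ * ⟪(ω : EuclideanSpace ℝ (Fin d)), w⟫)) σ :=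
    fun v w => contInt (hcont v w)
  -- the bilinear form
  set F : EuclideanSpace ℝ (Fin d) → EuclideanSpace ℝ (Fin d) → ℝ := fun v w => ∫ ω, M ω * (⟪(ω : EuclideanSpace ℝ (Fin d)), v⟫ * ⟪(ω : EuclideanSpace ℝ (Fin d)), w⟫) ∂σ with hFdef
  -- invariance
  have hFinv : ∀ e : EuclideanSpace ℝ (Fin d) ≃ₗᵢ[ℝ] EuclideanSpace ℝ (Fin d), (e (u : EuclideanSpace ℝ (Fin d)) = (u : EuclideanSpace ℝ (Fin d)) ∨ e (u : EuclideanSpace ℝ (Fin d)) = -(u : EuclideanSpace ℝ (Fin d))) →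
      ∀ v w : EuclideanSpace ℝ (Fin d), F v w = F (e v) (e w) := by
    intro e he v w
    have hstep := integral_rot hσ e.symm (hcont v w)
    rw [hFdef]
    simp only
    rw [hstep]
    refine integral_congr_ae (Filter.Eventually.of_forall fun ω => ?_)
    have hval : ((sphereRot e.symm ω : sphere (0 : EuclideanSpace ℝ (Fin d)) 1) : EuclideanSpace ℝ (Fin d)) = e.symm (ω : EuclideanSpace ℝ (Fin d)) := rfl
    have h2 : ∀ x : EuclideanSpace ℝ (Fin d), ⟪e.symm (ω : EuclideanSpace ℝ (Fin d)), x⟫ = ⟪(ω : EuclideanSpace ℝ (Fin d)), e x⟫ := by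
      intro x
      conv_rhs => rw [← e.apply_symm_apply (ω : EuclideanSpace ℝ (Fin d))]
      rw [e.inner_map_map]
    have hMrot : M (sphereRot e.symm ω) = M ω := by
      rw [hM, hM]
      congr 2
      rw [hval, h2]
      rcases he with h | h
      · rw [h]
      · rw [h, inner_neg_right, neg_sq]
    simp only [hval, hMrot, h2]
  -- bilinearity
  have hF_smulL : ∀ (c : ℝ) (x w : EuclideanSpace ℝ (Fin d)), F (c • x) w = c * F x w := by
    intro c x w
    have h : ∀ ω : sphere (0 : EuclideanSpace ℝ (Fin d)) 1, M ω * (⟪(ω : EuclideanSpace ℝ (Fin d)), c • x⟫ * ⟪(ω : EuclideanSpace ℝ (Fin d)), w⟫)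
        = c * (M ω * (⟪(ω : EuclideanSpace ℝ (Fin d)), x⟫ * ⟪(ω : EuclideanSpace ℝ (Fin d)), w⟫)) := by
      intro ω; rw [real_inner_smul_right]; ring
    rw [hFdef]; simp only [h]
    exact integral_const_mul c _
  have hF_comm : ∀ x w : EuclideanSpace ℝ (Fin d), F x w = F w x := by
    intro x w
    have h : ∀ ω : sphere (0 : EuclideanSpace ℝ (Fin d)) 1, M ω * (⟪(ω : EuclideanSpace ℝ (Fin d)), x⟫ * ⟪(ω : EuclideanSpace ℝ (Fin d)), w⟫)
        = M ω * (⟪(ω : EuclideanSpace ℝ (Fin d)), w⟫ * ⟪(ω : EuclideanSpace ℝ (Fin d)), x⟫) := fun ω => by ring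
    rw [hFdef]; simp only [h]
  have hF_addL : ∀ x y w : EuclideanSpace ℝ (Fin d), F (x + y) w = F x w + F y w := by
    intro x y w
    have h : ∀ ω : sphere (0 : EuclideanSpace ℝ (Fin d)) 1, M ω * (⟪(ω : EuclideanSpace ℝ (Fin d)), x + y⟫ * ⟪(ω : EuclideanSpace ℝ (Fin d)), w⟫)
        = M ω * (⟪(ω : EuclideanSpace ℝ (Fin d)), x⟫ * ⟪(ω : EuclideanSpace ℝ (Fin d)), w⟫) + M ω * (⟪(ω : EuclideanSpace ℝ (Fin d)), y⟫ * ⟪(ω : EuclideanSpace ℝ (Fin d)), w⟫) := by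
      intro ω; rw [inner_add_right]; ring
    rw [hFdef]; simp only [h]
    exact integral_add (hint x w) (hint y w)
  have hF_smulR : ∀ (c : ℝ) (x w : EuclideanSpace ℝ (Fin d)), F x (c • w) = c * F x w := by
    intro c x w; rw [hF_comm, hF_smulL, hF_comm]
  have hF_addR : ∀ w x y : EuclideanSpace ℝ (Fin d), F w (x + y) = F w x + F w y := by
    intro w x y; rw [hF_comm, hF_addL, hF_comm x w, hF_comm y w]
  -- mass one
  have hexpc : Continuous (fun ω : sphere (0 : EuclideanSpace ℝ (Fin d)) 1 => Real.exp (κ / 2 * ⟪(ω : EuclideanSpace ℝ (Fin d)), (u : EuclideanSpace ℝ (Fin d))⟫ ^ 2)) :=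
    Real.continuous_exp.comp (continuous_const.mul (hinnc.pow 2))
  have hZpos : 0 < Z := by
    rw [hZ]
    calc (0 : ℝ) < 1 := one_pos
      _ = ∫ _ : sphere (0 : EuclideanSpace ℝ (Fin d)) 1, (1 : ℝ) ∂σ := by simp
      _ ≤ ∫ ω, Real.exp (κ / 2 * ⟪(ω : EuclideanSpace ℝ (Fin d)), (u : EuclideanSpace ℝ (Fin d))⟫ ^ 2) ∂σ := by
          refine integral_mono (integrable_const 1) (contInt hexpc) fun ω => ?_
          exact Real.one_le_exp (by positivity)
  have hMint : ∫ ω, M ω ∂σ = 1 := by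
    simp only [hM]
    rw [integral_div, ← hZ, div_self (ne_of_gt hZpos)]
  have hMintg : Integrable M σ := contInt hMc
  -- F u p = 0 for p ⟂ u
  have hFup : ∀ p : EuclideanSpace ℝ (Fin d), ⟪p, (u : EuclideanSpace ℝ (Fin d))⟫ = 0 → F (u : EuclideanSpace ℝ (Fin d)) p = 0 := by
    intro p hpu
    set e := Submodule.reflection (ℝ ∙ (u : EuclideanSpace ℝ (Fin d)))ᗮ with hedef
    have heu : e (u : EuclideanSpace ℝ (Fin d)) = -(u : EuclideanSpace ℝ (Fin d)) := Submodule.reflection_orthogonalComplement_singleton_eq_neg _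
    have hep : e p = p := by
      apply Submodule.reflection_mem_subspace_eq_self
      rw [Submodule.mem_orthogonal_singleton_iff_inner_right, real_inner_comm]
      exact hpu
    have h := hFinv e (Or.inr heu) (u : EuclideanSpace ℝ (Fin d)) p
    rw [heu, hep] at h
    have h2 : F (-(u : EuclideanSpace ℝ (Fin d))) p = -F (u : EuclideanSpace ℝ (Fin d)) p := by
      have h3 := hF_smulL (-1 : ℝ) (u : EuclideanSpace ℝ (Fin d)) p
      rw [neg_one_smul] at h3
      rw [h3]; ring
    rw [h2] at h
    linarith
  -- choose a unit vector orthogonal to u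
  have hq0 : ∃ q : EuclideanSpace ℝ (Fin d), ‖q‖ = 1 ∧ ⟪q, (u : EuclideanSpace ℝ (Fin d))⟫ = 0 := by
    haveI : Fact (Module.finrank ℝ (EuclideanSpace ℝ (Fin d)) = (d - 1) + 1) :=
      ⟨by rw [finrank_euclideanSpace_fin]; omega⟩
    have hrk : Module.finrank ℝ ((ℝ ∙ (u : EuclideanSpace ℝ (Fin d)))ᗮ) = d - 1 :=
      Submodule.finrank_orthogonal_span_singleton hune
    have hpos : 0 < Module.finrank ℝ ((ℝ ∙ (u : EuclideanSpace ℝ (Fin d)))ᗮ) := by omega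
    obtain ⟨w, hw⟩ := Module.finrank_pos_iff_exists_ne_zero.mp hpos
    refine ⟨‖(w : EuclideanSpace ℝ (Fin d))‖⁻¹ • (w : EuclideanSpace ℝ (Fin d)), norm_smul_inv_norm ?_, ?_⟩
    · intro h; apply hw; exact Subtype.ext h
    · rw [real_inner_smul_left]
      have hwu : ⟪(w : EuclideanSpace ℝ (Fin d)), (u : EuclideanSpace ℝ (Fin d))⟫ = 0 := by
        have hmem := w.2
        rw [Submodule.mem_orthogonal_singleton_iff_inner_right] at hmem
        rw [real_inner_comm]; exact hmem
      rw [hwu, mul_zero]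
  obtain ⟨q₀, hq₀n, hq₀u⟩ := hq0
  set β : ℝ := F q₀ q₀ with hβdef
  -- β is the value on every unit vector ⟂ u
  have hβunit : ∀ p : EuclideanSpace ℝ (Fin d), ‖p‖ = 1 → ⟪p, (u : EuclideanSpace ℝ (Fin d))⟫ = 0 → F p p = β := by
    intro p hpn hpu
    set e := Submodule.reflection (ℝ ∙ (p - q₀))ᗮ with hedef
    have hep : e p = q₀ := Submodule.reflection_sub (by rw [hpn, hq₀n])
    have heu : e (u : EuclideanSpace ℝ (Fin d)) = (u : EuclideanSpace ℝ (Fin d)) := by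
      apply Submodule.reflection_mem_subspace_eq_self
      rw [Submodule.mem_orthogonal_singleton_iff_inner_right, inner_sub_left, hpu, hq₀u,
        sub_zero]
    have h := hFinv e (Or.inl heu) p p
    rw [hep] at h
    exact h
  have hβdiag : ∀ p : EuclideanSpace ℝ (Fin d), ⟪p, (u : EuclideanSpace ℝ (Fin d))⟫ = 0 → F p p = β * ⟪p, p⟫ := by
    intro p hpu
    rcases eq_or_ne p 0 with rfl | hp
    · have h0 : F (0 : EuclideanSpace ℝ (Fin d)) (0 : EuclideanSpace ℝ (Fin d)) = 0 := by
        have h1 := hF_smulL (0 : ℝ) 0 0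
        rw [zero_smul] at h1
        rw [h1]; ring
      rw [h0, inner_zero_left, mul_zero]
    · have hn : ‖p‖ ≠ 0 := norm_ne_zero_iff.mpr hp
      have h1 : p = ‖p‖ • (‖p‖⁻¹ • p) := by
        rw [smul_smul, mul_inv_cancel₀ hn, one_smul]
      have hq : ‖(‖p‖⁻¹ • p : EuclideanSpace ℝ (Fin d))‖ = 1 := norm_smul_inv_norm hp
      have hqu : ⟪(‖p‖⁻¹ • p : EuclideanSpace ℝ (Fin d)), (u : EuclideanSpace ℝ (Fin d))⟫ = 0 := by
        rw [real_inner_smul_left, hpu, mul_zero]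
      have hval : F (‖p‖⁻¹ • p) (‖p‖⁻¹ • p) = β := hβunit _ hq hqu
      calc F p p = ‖p‖ * (‖p‖ * F (‖p‖⁻¹ • p) (‖p‖⁻¹ • p)) := by
            conv_lhs => rw [h1]
            rw [hF_smulL, hF_smulR]
        _ = β * ⟪p, p⟫ := by
            rw [hval, real_inner_self_eq_norm_mul_norm]; ring
  have hβgen : ∀ p q : EuclideanSpace ℝ (Fin d), ⟪p, (u : EuclideanSpace ℝ (Fin d))⟫ = 0 → ⟪q, (u : EuclideanSpace ℝ (Fin d))⟫ = 0 → F p q = β * ⟪p, q⟫ := by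
    intro p q hpu hqu
    have hpq : ⟪p + q, (u : EuclideanSpace ℝ (Fin d))⟫ = 0 := by rw [inner_add_left, hpu, hqu, add_zero]
    have h1 := hβdiag _ hpq
    have h2 := hβdiag p hpu
    have h3 := hβdiag q hqu
    have hexp : F (p + q) (p + q) = F p p + F p q + (F p q + F q q) := by
      rw [hF_addL, hF_addR, hF_addR, hF_comm q p]
    have hin : ⟪p + q, p + q⟫ = ⟪p, p⟫ + 2 * ⟪p, q⟫ + ⟪q, q⟫ := by
      rw [inner_add_left, inner_add_right, inner_add_right, real_inner_comm q p]; ring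
    rw [hexp, hin] at h1
    linarith
  -- α
  set α : ℝ := F (u : EuclideanSpace ℝ (Fin d)) (u : EuclideanSpace ℝ (Fin d)) with hαdef
  have hlam' : lampar = α - 1 / (d : ℝ) := by
    have h : (∫ ω, M ω * ⟪(ω : EuclideanSpace ℝ (Fin d)), (u : EuclideanSpace ℝ (Fin d))⟫ ^ 2 ∂σ)
        = ∫ ω, M ω * (⟪(ω : EuclideanSpace ℝ (Fin d)), (u : EuclideanSpace ℝ (Fin d))⟫ * ⟪(ω : EuclideanSpace ℝ (Fin d)), (u : EuclideanSpace ℝ (Fin d))⟫) ∂σ :=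
      integral_congr_ae (Filter.Eventually.of_forall fun ω => by ring)
    rw [hlam, h]
  have hdecomp : ∀ i : Fin d, ∃ p : EuclideanSpace ℝ (Fin d),
      EuclideanSpace.single i (1 : ℝ) = (u : EuclideanSpace ℝ (Fin d)) i • (u : EuclideanSpace ℝ (Fin d)) + p ∧ ⟪p, (u : EuclideanSpace ℝ (Fin d))⟫ = 0 ∧
      ⟪p, p⟫ = 1 - (u : EuclideanSpace ℝ (Fin d)) i ^ 2 ∧ (∀ ξ : EuclideanSpace ℝ (Fin d), ⟪ξ, (u : EuclideanSpace ℝ (Fin d))⟫ = 0 → ⟪p, ξ⟫ = ξ i) := by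
    intro i
    refine ⟨EuclideanSpace.single i (1 : ℝ) - (u : EuclideanSpace ℝ (Fin d)) i • (u : EuclideanSpace ℝ (Fin d)), by abel, ?_, ?_, ?_⟩
    · simp only [inner_sub_left, real_inner_smul_left, huu, hcoordL, mul_one, sub_self]
    · simp only [inner_sub_left, inner_sub_right, real_inner_smul_left,
        real_inner_smul_right, huu, hcoordL, hcoordR, PiLp.sub_apply, PiLp.smul_apply,
        EuclideanSpace.single_apply, if_pos rfl, if_true, smul_eq_mul]
      ring
    · intro ξ hξ
      have hxu : ⟪(u : EuclideanSpace ℝ (Fin d)), ξ⟫ = 0 := by rw [real_inner_comm]; exact hξ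
      simp only [inner_sub_left, real_inner_smul_left, hcoordL, hxu]
      ring
  have hFeiu : ∀ i : Fin d, F (EuclideanSpace.single i (1 : ℝ)) (u : EuclideanSpace ℝ (Fin d)) = (u : EuclideanSpace ℝ (Fin d)) i * α := by
    intro i
    obtain ⟨p, hei, hpu, -, -⟩ := hdecomp i
    have h1 : F p (u : EuclideanSpace ℝ (Fin d)) = 0 := by rw [hF_comm]; exact hFup p hpu
    rw [hei, hF_addL, hF_smulL, h1, add_zero, hαdef]
  have hFeixi : ∀ (ξ : EuclideanSpace ℝ (Fin d)), ⟪ξ, (u : EuclideanSpace ℝ (Fin d))⟫ = 0 →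
      ∀ i, F (EuclideanSpace.single i (1 : ℝ)) ξ = β * ξ i := by
    intro ξ hξ i
    obtain ⟨p, hei, hpu, -, hpx⟩ := hdecomp i
    rw [hei, hF_addL, hF_smulL, hFup ξ hξ, mul_zero, zero_add, hβgen p ξ hpu hξ, hpx ξ hξ]
  -- trace identity
  have htrace : α + β * ((d : ℝ) - 1) = 1 := by
    have hωnorm : ∀ ω : sphere (0 : EuclideanSpace ℝ (Fin d)) 1, ⟪(ω : EuclideanSpace ℝ (Fin d)), (ω : EuclideanSpace ℝ (Fin d))⟫ = 1 := by
      intro ω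
      have hmem := ω.2
      rw [mem_sphere_iff_norm, sub_zero] at hmem
      rw [real_inner_self_eq_norm_mul_norm, hmem]; norm_num
    have hsum1 : ∑ i, F (EuclideanSpace.single i (1 : ℝ)) (EuclideanSpace.single i (1 : ℝ))
        = 1 := by
      rw [hFdef]
      simp only
      rw [← integral_finset_sum _ (fun i _ => hint _ _)]
      have h : ∀ ω : sphere (0 : EuclideanSpace ℝ (Fin d)) 1, (∑ i, M ω * (⟪(ω : EuclideanSpace ℝ (Fin d)), EuclideanSpace.single i (1 : ℝ)⟫ *
          ⟪(ω : EuclideanSpace ℝ (Fin d)), EuclideanSpace.single i (1 : ℝ)⟫)) = M ω := by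
        intro ω
        rw [← Finset.mul_sum]
        have h2 : ∑ i, ⟪(ω : EuclideanSpace ℝ (Fin d)), EuclideanSpace.single i (1 : ℝ)⟫ *
            ⟪(ω : EuclideanSpace ℝ (Fin d)), EuclideanSpace.single i (1 : ℝ)⟫ = ⟪(ω : EuclideanSpace ℝ (Fin d)), (ω : EuclideanSpace ℝ (Fin d))⟫ := by
          rw [hinner]
          refine Finset.sum_congr rfl fun i _ => ?_
          rw [hcoordR]
        rw [h2, hωnorm, mul_one]
      simp only [h, hMint]
    have hterm : ∀ i, F (EuclideanSpace.single i (1 : ℝ)) (EuclideanSpace.single i (1 : ℝ))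
        = (u : EuclideanSpace ℝ (Fin d)) i ^ 2 * α + β * (1 - (u : EuclideanSpace ℝ (Fin d)) i ^ 2) := by
      intro i
      obtain ⟨p, hei, hpu, hpp, -⟩ := hdecomp i
      have h1 : F p (u : EuclideanSpace ℝ (Fin d)) = 0 := by rw [hF_comm]; exact hFup p hpu
      have h2 : F p p = β * (1 - (u : EuclideanSpace ℝ (Fin d)) i ^ 2) := by rw [hβgen p p hpu hpu, hpp]
      rw [hei]
      simp only [hF_addL, hF_addR, hF_smulL, hF_smulR, hFup p hpu, h1, h2]
      rw [hαdef]
      ring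
    have husq : ∑ i, (u : EuclideanSpace ℝ (Fin d)) i ^ 2 = 1 := by
      have h := huu
      rw [hinner] at h
      simpa [sq] using h
    have hfin : ∑ i : Fin d,
        F (EuclideanSpace.single i (1 : ℝ)) (EuclideanSpace.single i (1 : ℝ))
        = α + β * ((d : ℝ) - 1) := by
      simp only [hterm]
      rw [Finset.sum_add_distrib, ← Finset.sum_mul, husq, ← Finset.mul_sum,
        Finset.sum_sub_distrib, husq]
      simp only [Finset.sum_const, Finset.card_univ, Fintype.card_fin, nsmul_eq_mul, mul_one]
      ring
    rw [hfin] at hsum1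
    exact hsum1
  -- main computation: Q applied to a vector
  have hQv : ∀ (v : EuclideanSpace ℝ (Fin d)) (i : Fin d),
      (∑ j, Q i j * v j) = F (EuclideanSpace.single i (1 : ℝ)) v - (1 / (d : ℝ)) * v i := by
    intro v i
    have hQj : ∀ j, Q i j * v j = ∫ ω, (M ω * ((ω : EuclideanSpace ℝ (Fin d)) i * (ω : EuclideanSpace ℝ (Fin d)) j -
        (if i = j then 1 / (d : ℝ) else 0))) * v j ∂σ := by
      intro j
      rw [hQ]
      exact (integral_mul_const _ _).symm
    have hc : ∀ k : Fin d, Continuous (fun ω : sphere (0 : EuclideanSpace ℝ (Fin d)) 1 => (ω : EuclideanSpace ℝ (Fin d)) k) := by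
      intro k
      have h : (fun ω : sphere (0 : EuclideanSpace ℝ (Fin d)) 1 => (ω : EuclideanSpace ℝ (Fin d)) k) = fun ω : sphere (0 : EuclideanSpace ℝ (Fin d)) 1 =>
          ⟪(ω : EuclideanSpace ℝ (Fin d)), EuclideanSpace.single k (1 : ℝ)⟫ := by
        funext ω; rw [hcoordR]
      rw [h]
      exact continuous_subtype_val.inner continuous_const
    have hintg : ∀ j : Fin d, Integrable (fun ω : sphere (0 : EuclideanSpace ℝ (Fin d)) 1 => (M ω * ((ω : EuclideanSpace ℝ (Fin d)) i * (ω : EuclideanSpace ℝ (Fin d)) j -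
        (if i = j then 1 / (d : ℝ) else 0))) * v j) σ := by
      intro j
      apply contInt
      exact (hMc.mul (((hc i).mul (hc j)).sub continuous_const)).mul continuous_const
    have hptwise : ∀ ω : sphere (0 : EuclideanSpace ℝ (Fin d)) 1, (∑ j, (M ω * ((ω : EuclideanSpace ℝ (Fin d)) i * (ω : EuclideanSpace ℝ (Fin d)) j -
        (if i = j then 1 / (d : ℝ) else 0))) * v j)
        = M ω * (⟪(ω : EuclideanSpace ℝ (Fin d)), EuclideanSpace.single i (1 : ℝ)⟫ * ⟪(ω : EuclideanSpace ℝ (Fin d)), v⟫)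
          - M ω * ((1 / (d : ℝ)) * v i) := by
      intro ω
      have hterm : ∀ j, (M ω * ((ω : EuclideanSpace ℝ (Fin d)) i * (ω : EuclideanSpace ℝ (Fin d)) j -
          (if i = j then 1 / (d : ℝ) else 0))) * v j
          = M ω * (ω : EuclideanSpace ℝ (Fin d)) i * ((ω : EuclideanSpace ℝ (Fin d)) j * v j) -
            (if i = j then M ω * (1 / (d : ℝ)) * v j else 0) := by
        intro j
        by_cases h : i = j
        · subst h; rw [if_pos rfl, if_pos rfl]; ring
        · rw [if_neg h, if_neg h]; ring
      simp only [hterm]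
      rw [Finset.sum_sub_distrib, ← Finset.mul_sum, Finset.sum_ite_eq, if_pos (Finset.mem_univ i)]
      rw [hcoordR, hinner]
      ring
    calc ∑ j, Q i j * v j = ∑ j, ∫ ω, (M ω * ((ω : EuclideanSpace ℝ (Fin d)) i * (ω : EuclideanSpace ℝ (Fin d)) j -
          (if i = j then 1 / (d : ℝ) else 0))) * v j ∂σ :=
        Finset.sum_congr rfl fun j _ => hQj j
      _ = ∫ ω, ∑ j, (M ω * ((ω : EuclideanSpace ℝ (Fin d)) i * (ω : EuclideanSpace ℝ (Fin d)) j -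
          (if i = j then 1 / (d : ℝ) else 0))) * v j ∂σ :=
        (integral_finset_sum _ (fun j _ => hintg j)).symm
      _ = ∫ ω, (M ω * (⟪(ω : EuclideanSpace ℝ (Fin d)), EuclideanSpace.single i (1 : ℝ)⟫ * ⟪(ω : EuclideanSpace ℝ (Fin d)), v⟫)
          - M ω * ((1 / (d : ℝ)) * v i)) ∂σ :=
        integral_congr_ae (Filter.Eventually.of_forall fun ω => hptwise ω)
      _ = F (EuclideanSpace.single i (1 : ℝ)) v - (1 / (d : ℝ)) * v i := by
        rw [integral_sub (hint _ _) (hMintg.mul_const _)]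
        rw [hFdef]
        simp only
        congr 1
        rw [integral_mul_const, hMint, one_mul]
  -- conclude
  have hdR : (2 : ℝ) ≤ (d : ℝ) := by exact_mod_cast hd
  have hd1 : (d : ℝ) - 1 ≠ 0 := by linarith
  have hd0 : (d : ℝ) ≠ 0 := by linarith
  constructor
  · intro i
    rw [hQv (u : EuclideanSpace ℝ (Fin d)) i, hFeiu i, hlam']
    ring
  · intro ξ hξ i
    rw [hQv ξ i, hFeixi ξ hξ i]
    have hβval : β = (1 - α) / ((d : ℝ) - 1) := by
      rw [eq_div_iff hd1]
      linear_combination htrace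
    have hcoef : β - 1 / (d : ℝ) = -(lampar / ((d : ℝ) - 1)) := by
      rw [hlam', hβval]
      field_simp
      ring
    calc β * ξ i - 1 / (d : ℝ) * ξ i = (β - 1 / (d : ℝ)) * ξ i := by ring
      _ = -(lampar / ((d : ℝ) - 1)) * ξ i := by rw [hcoef]
end

section
/- For every κ ∈ ℝ and every unit vector u ∈ S^{d-1}, the following integration-by-parts identity holds: (d−1) ∫_{S^{d-1}} exp((κ/2)(ω·u)²) (ω·u)² dσ(ω) = ∫_{S^{d-1}} exp((κ/2)(ω·u)²) (1 − (ω·u)²)(1 + κ(ω·u)²) dσ(ω). -/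
open MeasureTheory Metric
open scoped RealInnerProductSpace

section Aux

variable {d : ℕ}

noncomputable def rotMap (u v : EuclideanSpace ℝ (Fin d)) (c s : ℝ) :
    EuclideanSpace ℝ (Fin d) →ₗ[ℝ] EuclideanSpace ℝ (Fin d) where
  toFun x := x + ((c - 1) * ⟪x, u⟫ - s * ⟪x, v⟫) • u + (s * ⟪x, u⟫ + (c - 1) * ⟪x, v⟫) • v
  map_add' x y := by
    simp only [inner_add_left]
    match_scalars <;> ring
  map_smul' r x := by
    simp only [real_inner_smul_left, RingHom.id_apply]
    match_scalars <;> ring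

lemma rotMap_inner (u v : EuclideanSpace ℝ (Fin d)) (hu : ‖u‖ = 1) (hv : ‖v‖ = 1)
    (huv : ⟪u, v⟫ = 0) (c s : ℝ) (hcs : c ^ 2 + s ^ 2 = 1) (x y : EuclideanSpace ℝ (Fin d)) :
    ⟪rotMap u v c s x, rotMap u v c s y⟫ = ⟪x, y⟫ := by
  have h1 : ⟪u, u⟫ = 1 := by rw [real_inner_self_eq_norm_sq, hu]; norm_num
  have h2 : ⟪v, v⟫ = 1 := by rw [real_inner_self_eq_norm_sq, hv]; norm_num
  have h3 : ⟪v, u⟫ = 0 := by rw [real_inner_comm]; exact huv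
  simp only [rotMap, LinearMap.coe_mk, AddHom.coe_mk, inner_add_left, inner_add_right,
    real_inner_smul_left, real_inner_smul_right, h1, h2, h3, huv]
  have hxu : ⟪u, y⟫ = ⟪y, u⟫ := real_inner_comm _ _
  have hxv : ⟪v, y⟫ = ⟪y, v⟫ := real_inner_comm _ _
  rw [hxu, hxv]
  linear_combination (⟪x, u⟫ * ⟪y, u⟫ + ⟪x, v⟫ * ⟪y, v⟫) * hcs

noncomputable def rotIso (u v : EuclideanSpace ℝ (Fin d)) (hu : ‖u‖ = 1) (hv : ‖v‖ = 1)
    (huv : ⟪u, v⟫ = 0) (c s : ℝ) (hcs : c ^ 2 + s ^ 2 = 1) :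
    EuclideanSpace ℝ (Fin d) ≃ₗᵢ[ℝ] EuclideanSpace ℝ (Fin d) :=
  ((rotMap u v c s).isometryOfInner (rotMap_inner u v hu hv huv c s hcs)).toLinearIsometryEquiv rfl

lemma rotIso_apply_u (u v : EuclideanSpace ℝ (Fin d)) (hu : ‖u‖ = 1) (hv : ‖v‖ = 1)
    (huv : ⟪u, v⟫ = 0) (c s : ℝ) (hcs : c ^ 2 + s ^ 2 = 1) :
    rotIso u v hu hv huv c s hcs u = c • u + s • v := by
  have h1 : ⟪u, u⟫ = 1 := by rw [real_inner_self_eq_norm_sq, hu]; norm_num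
  simp only [rotIso, LinearIsometry.toLinearIsometryEquiv_apply, LinearMap.coe_isometryOfInner,
    rotMap, LinearMap.coe_mk, AddHom.coe_mk, h1, huv]
  match_scalars <;> ring

lemma rotIso_apply_v (u v : EuclideanSpace ℝ (Fin d)) (hu : ‖u‖ = 1) (hv : ‖v‖ = 1)
    (huv : ⟪u, v⟫ = 0) (c s : ℝ) (hcs : c ^ 2 + s ^ 2 = 1) :
    rotIso u v hu hv huv c s hcs v = (-s) • u + c • v := by
  have h2 : ⟪v, v⟫ = 1 := by rw [real_inner_self_eq_norm_sq, hv]; norm_num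
  have h3 : ⟪v, u⟫ = 0 := by rw [real_inner_comm]; exact huv
  simp only [rotIso, LinearIsometry.toLinearIsometryEquiv_apply, LinearMap.coe_isometryOfInner,
    rotMap, LinearMap.coe_mk, AddHom.coe_mk, h2, h3]
  match_scalars <;> ring

lemma continuous_sphereRot (e : EuclideanSpace ℝ (Fin d) ≃ₗᵢ[ℝ] EuclideanSpace ℝ (Fin d)) :
    Continuous (sphereRot e) :=
  Continuous.subtype_mk (e.continuous.comp continuous_subtype_val) _

lemma inner_sphereRot (e : EuclideanSpace ℝ (Fin d) ≃ₗᵢ[ℝ] EuclideanSpace ℝ (Fin d))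
    (ω : sphere (0 : EuclideanSpace ℝ (Fin d)) 1) (w : EuclideanSpace ℝ (Fin d)) :
    ⟪(sphereRot e ω : EuclideanSpace ℝ (Fin d)), w⟫ = ⟪(ω : EuclideanSpace ℝ (Fin d)), e.symm w⟫ := by
  conv_lhs => rw [show w = e (e.symm w) from (e.apply_symm_apply w).symm]
  exact e.inner_map_map _ _

lemma integral_sphereRot (σ : Measure (sphere (0 : EuclideanSpace ℝ (Fin d)) 1))
    (hσ : ∀ e : EuclideanSpace ℝ (Fin d) ≃ₗᵢ[ℝ] EuclideanSpace ℝ (Fin d),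
      σ.map (sphereRot e) = σ)
    (e : EuclideanSpace ℝ (Fin d) ≃ₗᵢ[ℝ] EuclideanSpace ℝ (Fin d))
    (F : sphere (0 : EuclideanSpace ℝ (Fin d)) 1 → ℝ) (hF : AEStronglyMeasurable F σ) :
    ∫ ω, F (sphereRot e ω) ∂σ = ∫ ω, F ω ∂σ := by
  have h := hσ e
  have hF' : AEStronglyMeasurable F (σ.map (sphereRot e)) := h.symm ▸ hF
  calc ∫ ω, F (sphereRot e ω) ∂σ
      = ∫ ω, F ω ∂(σ.map (sphereRot e)) :=
        (integral_map (continuous_sphereRot e).aemeasurable hF').symm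
    _ = ∫ ω, F ω ∂σ := by rw [h]

lemma sphere_integrable (σ : Measure (sphere (0 : EuclideanSpace ℝ (Fin d)) 1))
    [IsFiniteMeasure σ] {f : sphere (0 : EuclideanSpace ℝ (Fin d)) 1 → ℝ}
    (hf : Continuous f) : Integrable f σ :=
  hf.integrable_of_hasCompactSupport (HasCompactSupport.of_compactSpace f)

lemma continuous_innerS (w : EuclideanSpace ℝ (Fin d)) :
    Continuous fun ω : sphere (0 : EuclideanSpace ℝ (Fin d)) 1 =>
      ⟪(ω : EuclideanSpace ℝ (Fin d)), w⟫ :=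
  Continuous.inner continuous_subtype_val continuous_const

lemma abs_inner_le_one (w : EuclideanSpace ℝ (Fin d)) (hw : ‖w‖ = 1)
    (ω : sphere (0 : EuclideanSpace ℝ (Fin d)) 1) :
    |⟪(ω : EuclideanSpace ℝ (Fin d)), w⟫| ≤ 1 := by
  have hω : ‖(ω : EuclideanSpace ℝ (Fin d))‖ = 1 := by
    have := ω.2; rwa [mem_sphere_zero_iff_norm] at this
  calc |⟪(ω : EuclideanSpace ℝ (Fin d)), w⟫| ≤ ‖(ω : EuclideanSpace ℝ (Fin d))‖ * ‖w‖ :=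
        abs_real_inner_le_norm _ _
    _ = 1 := by rw [hω, hw]; ring

lemma hasDerivAt_f1 (κ r : ℝ) :
    HasDerivAt (fun x : ℝ => Real.exp (κ / 2 * x ^ 2) * x)
      (Real.exp (κ / 2 * r ^ 2) * (1 + κ * r ^ 2)) r := by
  have h1 : HasDerivAt (fun x : ℝ => κ / 2 * x ^ 2) (κ / 2 * (2 * r)) r := by
    simpa using (hasDerivAt_pow 2 r).const_mul (κ / 2)
  have h2 := h1.exp.mul (hasDerivAt_id r)
  refine h2.congr_deriv ?_
  simp only [id_eq]
  ring

lemma hasDerivAt_inner_rot (κ t s θ : ℝ) :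
    HasDerivAt (fun x : ℝ =>
        Real.exp (κ / 2 * (Real.cos x * t + Real.sin x * s) ^ 2) *
          (Real.cos x * t + Real.sin x * s) * (-Real.sin x * t + Real.cos x * s))
      (Real.exp (κ / 2 * (Real.cos θ * t + Real.sin θ * s) ^ 2) *
          (1 + κ * (Real.cos θ * t + Real.sin θ * s) ^ 2) *
            (-Real.sin θ * t + Real.cos θ * s) ^ 2 -
        Real.exp (κ / 2 * (Real.cos θ * t + Real.sin θ * s) ^ 2) *
          (Real.cos θ * t + Real.sin θ * s) * (Real.cos θ * t + Real.sin θ * s)) θ := by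
  have hA : HasDerivAt (fun x : ℝ => Real.cos x * t + Real.sin x * s)
      (-Real.sin θ * t + Real.cos θ * s) θ :=
    ((Real.hasDerivAt_cos θ).mul_const t).add ((Real.hasDerivAt_sin θ).mul_const s)
  have hB : HasDerivAt (fun x : ℝ => -Real.sin x * t + Real.cos x * s)
      (-Real.cos θ * t + -Real.sin θ * s) θ := by
    have := (((Real.hasDerivAt_sin θ).neg).mul_const t).add ((Real.hasDerivAt_cos θ).mul_const s)
    exact this
  have hf := (hasDerivAt_f1 κ (Real.cos θ * t + Real.sin θ * s)).comp θ hA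
  have := hf.mul hB
  refine this.congr_deriv ?_
  simp only [Function.comp]
  ring

lemma rot_deriv_bound (κ A B : ℝ) (habsA : |A| ≤ 2) (habsB : |B| ≤ 2) :
    |Real.exp (κ / 2 * A ^ 2) * (1 + κ * A ^ 2) * B ^ 2 -
        Real.exp (κ / 2 * A ^ 2) * A * A| ≤
      Real.exp (2 * |κ|) * (8 + 16 * |κ|) := by
  have hA2 : A ^ 2 ≤ 4 := by nlinarith [abs_le.1 habsA]
  have hB2 : B ^ 2 ≤ 4 := by nlinarith [abs_le.1 habsB]
  have hA2' : (0:ℝ) ≤ A ^ 2 := sq_nonneg A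
  have hB2' : (0:ℝ) ≤ B ^ 2 := sq_nonneg B
  have hE : Real.exp (κ / 2 * A ^ 2) ≤ Real.exp (2 * |κ|) := by
    apply Real.exp_le_exp.2
    have h1 : κ * A ^ 2 ≤ |κ| * A ^ 2 := mul_le_mul_of_nonneg_right (le_abs_self κ) hA2'
    have h2 : |κ| * A ^ 2 ≤ |κ| * 4 := mul_le_mul_of_nonneg_left hA2 (abs_nonneg κ)
    linarith
  have hEpos : (0:ℝ) < Real.exp (κ / 2 * A ^ 2) := Real.exp_pos _
  have hE0pos : (0:ℝ) < Real.exp (2 * |κ|) := Real.exp_pos _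
  have h1 : |Real.exp (κ / 2 * A ^ 2) * (1 + κ * A ^ 2) * B ^ 2| ≤
      Real.exp (2 * |κ|) * (1 + 4 * |κ|) * 4 := by
    rw [abs_mul, abs_mul, abs_of_pos hEpos, abs_of_nonneg hB2']
    have hmid : |1 + κ * A ^ 2| ≤ 1 + 4 * |κ| := by
      calc |1 + κ * A ^ 2| ≤ |(1:ℝ)| + |κ * A ^ 2| := abs_add_le _ _
        _ ≤ 1 + 4 * |κ| := by
            rw [abs_one, abs_mul, abs_of_nonneg hA2']
            have := mul_le_mul_of_nonneg_left hA2 (abs_nonneg κ)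
            linarith
    have s1 : Real.exp (κ / 2 * A ^ 2) * |1 + κ * A ^ 2| ≤
        Real.exp (2 * |κ|) * (1 + 4 * |κ|) :=
      mul_le_mul hE hmid (abs_nonneg _) hE0pos.le
    exact mul_le_mul s1 hB2 hB2' (by positivity)
  have h2 : |Real.exp (κ / 2 * A ^ 2) * A * A| ≤ Real.exp (2 * |κ|) * 4 := by
    rw [abs_mul, abs_mul, abs_of_pos hEpos]
    have s2 : |A| * |A| ≤ 4 := by nlinarith [abs_nonneg A]
    calc Real.exp (κ / 2 * A ^ 2) * |A| * |A|
        = Real.exp (κ / 2 * A ^ 2) * (|A| * |A|) := by ring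
      _ ≤ Real.exp (2 * |κ|) * 4 :=
        mul_le_mul hE s2 (by positivity) hE0pos.le
  calc |Real.exp (κ / 2 * A ^ 2) * (1 + κ * A ^ 2) * B ^ 2 -
          Real.exp (κ / 2 * A ^ 2) * A * A| ≤
        |Real.exp (κ / 2 * A ^ 2) * (1 + κ * A ^ 2) * B ^ 2| +
          |Real.exp (κ / 2 * A ^ 2) * A * A| := abs_sub _ _
    _ ≤ Real.exp (2 * |κ|) * (8 + 16 * |κ|) := by linarith

end Aux

lemma abs_lin_le_two (c1 s1 t s : ℝ) (hc : |c1| ≤ 1) (hs1 : |s1| ≤ 1) (ht : |t| ≤ 1)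
    (hs : |s| ≤ 1) : |c1 * t + s1 * s| ≤ 2 := by
  calc |c1 * t + s1 * s| ≤ |c1 * t| + |s1 * s| := abs_add_le _ _
    _ ≤ 2 := by
        rw [abs_mul, abs_mul]
        nlinarith [abs_nonneg c1, abs_nonneg t, abs_nonneg s1, abs_nonneg s]

/-- the integration-by-parts identity on the sphere:
`(d−1) ∫ e^{(κ/2)(ω·u)²} (ω·u)² dσ = ∫ e^{(κ/2)(ω·u)²} (1 − (ω·u)²)(1 + κ(ω·u)²) dσ`. -/
theorem stmt6 (d : ℕ) (hd : 2 ≤ d)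
    (σ : Measure (sphere (0 : EuclideanSpace ℝ (Fin d)) 1))
    [IsProbabilityMeasure σ]
    (hσ : ∀ e : EuclideanSpace ℝ (Fin d) ≃ₗᵢ[ℝ] EuclideanSpace ℝ (Fin d),
      σ.map (sphereRot e) = σ)
    (κ : ℝ) (u : sphere (0 : EuclideanSpace ℝ (Fin d)) 1) :
    ((d : ℝ) - 1) * ∫ ω, Real.exp (κ / 2 *
        ⟪(ω : EuclideanSpace ℝ (Fin d)), (u : EuclideanSpace ℝ (Fin d))⟫ ^ 2) *
        ⟪(ω : EuclideanSpace ℝ (Fin d)), (u : EuclideanSpace ℝ (Fin d))⟫ ^ 2 ∂σ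
      = ∫ ω, Real.exp (κ / 2 *
          ⟪(ω : EuclideanSpace ℝ (Fin d)), (u : EuclideanSpace ℝ (Fin d))⟫ ^ 2) *
          ((1 - ⟪(ω : EuclideanSpace ℝ (Fin d)), (u : EuclideanSpace ℝ (Fin d))⟫ ^ 2) *
            (1 + κ * ⟪(ω : EuclideanSpace ℝ (Fin d)), (u : EuclideanSpace ℝ (Fin d))⟫ ^ 2)) ∂σ := by
  classical
  have hd0 : 0 < d := by omega
  set uE : EuclideanSpace ℝ (Fin d) := (u : EuclideanSpace ℝ (Fin d)) with huE
  let i0 : Fin d := ⟨0, by omega⟩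
  let i1 : Fin d := ⟨1, by omega⟩
  have hi01 : i0 ≠ i1 := by simp [i0, i1, Fin.ext_iff]
  have hnu : ‖uE‖ = 1 := by
    have := u.2; rwa [mem_sphere_zero_iff_norm] at this
  have hcard : Module.finrank ℝ (EuclideanSpace ℝ (Fin d)) = Fintype.card (Fin d) := by simp
  have horth : Orthonormal ℝ (Set.restrict {i0} fun _ : Fin d => uE) := by
    rw [orthonormal_iff_ite]
    rintro ⟨i, hi⟩ ⟨j, hj⟩
    have hij : (⟨i, hi⟩ : ({i0} : Set (Fin d))) = ⟨j, hj⟩ := by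
      apply Subtype.ext
      rw [Set.mem_singleton_iff] at hi hj
      simpa using hi.trans hj.symm
    rw [hij, if_pos rfl]
    show ⟪uE, uE⟫ = 1
    rw [real_inner_self_eq_norm_sq, hnu]; norm_num
  obtain ⟨B, hB⟩ := horth.exists_orthonormalBasis_extension_of_card_eq hcard
  have hBu : B i0 = uE := hB i0 rfl
  have hnv : ‖B i1‖ = 1 := B.orthonormal.1 i1
  have huv : ⟪uE, B i1⟫ = 0 := by rw [← hBu]; exact B.orthonormal.2 hi01
  have habsu : ∀ ω : sphere (0 : EuclideanSpace ℝ (Fin d)) 1,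
      |⟪(ω : EuclideanSpace ℝ (Fin d)), uE⟫| ≤ 1 := abs_inner_le_one uE hnu
  have habsv : ∀ ω : sphere (0 : EuclideanSpace ℝ (Fin d)) 1,
      |⟪(ω : EuclideanSpace ℝ (Fin d)), B i1⟫| ≤ 1 := abs_inner_le_one (B i1) hnv
  -- continuity facts
  have hcu := continuous_innerS uE
  have hcv := continuous_innerS (B i1)
  -- the rotated integrand family and its θ-derivative
  set F : ℝ → sphere (0 : EuclideanSpace ℝ (Fin d)) 1 → ℝ := fun x ω =>
    Real.exp (κ / 2 * (Real.cos x * ⟪(ω : EuclideanSpace ℝ (Fin d)), uE⟫ +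
        Real.sin x * ⟪(ω : EuclideanSpace ℝ (Fin d)), B i1⟫) ^ 2) *
      (Real.cos x * ⟪(ω : EuclideanSpace ℝ (Fin d)), uE⟫ +
        Real.sin x * ⟪(ω : EuclideanSpace ℝ (Fin d)), B i1⟫) *
      (-Real.sin x * ⟪(ω : EuclideanSpace ℝ (Fin d)), uE⟫ +
        Real.cos x * ⟪(ω : EuclideanSpace ℝ (Fin d)), B i1⟫) with hFdef
  set F' : ℝ → sphere (0 : EuclideanSpace ℝ (Fin d)) 1 → ℝ := fun x ω =>
    Real.exp (κ / 2 * (Real.cos x * ⟪(ω : EuclideanSpace ℝ (Fin d)), uE⟫ +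
        Real.sin x * ⟪(ω : EuclideanSpace ℝ (Fin d)), B i1⟫) ^ 2) *
      (1 + κ * (Real.cos x * ⟪(ω : EuclideanSpace ℝ (Fin d)), uE⟫ +
        Real.sin x * ⟪(ω : EuclideanSpace ℝ (Fin d)), B i1⟫) ^ 2) *
      (-Real.sin x * ⟪(ω : EuclideanSpace ℝ (Fin d)), uE⟫ +
        Real.cos x * ⟪(ω : EuclideanSpace ℝ (Fin d)), B i1⟫) ^ 2 -
    Real.exp (κ / 2 * (Real.cos x * ⟪(ω : EuclideanSpace ℝ (Fin d)), uE⟫ +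
        Real.sin x * ⟪(ω : EuclideanSpace ℝ (Fin d)), B i1⟫) ^ 2) *
      (Real.cos x * ⟪(ω : EuclideanSpace ℝ (Fin d)), uE⟫ +
        Real.sin x * ⟪(ω : EuclideanSpace ℝ (Fin d)), B i1⟫) *
      (Real.cos x * ⟪(ω : EuclideanSpace ℝ (Fin d)), uE⟫ +
        Real.sin x * ⟪(ω : EuclideanSpace ℝ (Fin d)), B i1⟫) with hF'def
  have hcontA : ∀ x : ℝ, Continuous fun ω : sphere (0 : EuclideanSpace ℝ (Fin d)) 1 =>
      Real.cos x * ⟪(ω : EuclideanSpace ℝ (Fin d)), uE⟫ +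
        Real.sin x * ⟪(ω : EuclideanSpace ℝ (Fin d)), B i1⟫ :=
    fun x => (continuous_const.mul hcu).add (continuous_const.mul hcv)
  have hcontB : ∀ x : ℝ, Continuous fun ω : sphere (0 : EuclideanSpace ℝ (Fin d)) 1 =>
      -Real.sin x * ⟪(ω : EuclideanSpace ℝ (Fin d)), uE⟫ +
        Real.cos x * ⟪(ω : EuclideanSpace ℝ (Fin d)), B i1⟫ :=
    fun x => (continuous_const.mul hcu).add (continuous_const.mul hcv)
  have hcontF : ∀ x : ℝ, Continuous (F x) := fun x =>
    ((Real.continuous_exp.comp (continuous_const.mul ((hcontA x).pow 2))).mul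
      (hcontA x)).mul (hcontB x)
  have hcontF' : ∀ x : ℝ, Continuous (F' x) := fun x =>
    (((Real.continuous_exp.comp (continuous_const.mul ((hcontA x).pow 2))).mul
        (continuous_const.add (continuous_const.mul ((hcontA x).pow 2)))).mul
      ((hcontB x).pow 2)).sub
      (((Real.continuous_exp.comp (continuous_const.mul ((hcontA x).pow 2))).mul
        (hcontA x)).mul (hcontA x))
  have hderiv : HasDerivAt (fun x => ∫ ω, F x ω ∂σ) (∫ ω, F' 0 ω ∂σ) 0 := by
    refine (hasDerivAt_integral_of_dominated_loc_of_deriv_le (s := Metric.ball 0 1) (Metric.ball_mem_nhds 0 one_pos)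
      (Filter.Eventually.of_forall fun x => (hcontF x).aestronglyMeasurable)
      (sphere_integrable σ (hcontF 0))
      ((hcontF' 0).aestronglyMeasurable)
      (bound := fun _ => Real.exp (2 * |κ|) * (8 + 16 * |κ|)) ?_ (integrable_const _)
      ?_).2
    · refine Filter.Eventually.of_forall fun ω => fun x _ => ?_
      have h1 := abs_lin_le_two (Real.cos x) (Real.sin x) _ _
        (Real.abs_cos_le_one x) (Real.abs_sin_le_one x) (habsu ω) (habsv ω)
      have h2 := abs_lin_le_two (-Real.sin x) (Real.cos x) _ _
        (by rw [abs_neg]; exact Real.abs_sin_le_one x) (Real.abs_cos_le_one x)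
        (habsu ω) (habsv ω)
      simpa [F', Real.norm_eq_abs] using rot_deriv_bound κ _ _ h1 h2
    · refine Filter.Eventually.of_forall fun ω => fun x _ => ?_
      exact hasDerivAt_inner_rot κ ⟪(ω : EuclideanSpace ℝ (Fin d)), uE⟫
        ⟪(ω : EuclideanSpace ℝ (Fin d)), B i1⟫ x
  have hconst : ∀ θ : ℝ, (∫ ω, F θ ω ∂σ) = ∫ ω, F 0 ω ∂σ := by
    intro θ
    have hcs : Real.cos θ ^ 2 + (-Real.sin θ) ^ 2 = 1 := by
      have h := Real.sin_sq_add_cos_sq θ; nlinarith [h]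
    set e := rotIso uE (B i1) hnu hnv huv (Real.cos θ) (-Real.sin θ) hcs with he_def
    have heu : e uE = Real.cos θ • uE + (-Real.sin θ) • B i1 :=
      rotIso_apply_u uE (B i1) hnu hnv huv (Real.cos θ) (-Real.sin θ) hcs
    have hev : e (B i1) = Real.sin θ • uE + Real.cos θ • B i1 := by
      have h := rotIso_apply_v uE (B i1) hnu hnv huv (Real.cos θ) (-Real.sin θ) hcs
      rw [show -(-Real.sin θ) = Real.sin θ from neg_neg _] at h
      exact h
    have hsymm_u : e.symm uE = Real.cos θ • uE + Real.sin θ • B i1 := by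
      have h : e (Real.cos θ • uE + Real.sin θ • B i1) = uE := by
        rw [map_add, LinearIsometryEquiv.map_smul, LinearIsometryEquiv.map_smul, heu, hev]
        match_scalars
        · linear_combination Real.sin_sq_add_cos_sq θ
        · ring
      conv_lhs => rw [← h]
      exact e.symm_apply_apply _
    have hsymm_v : e.symm (B i1) = (-Real.sin θ) • uE + Real.cos θ • B i1 := by
      have h : e ((-Real.sin θ) • uE + Real.cos θ • B i1) = B i1 := by
        rw [map_add, LinearIsometryEquiv.map_smul, LinearIsometryEquiv.map_smul, heu, hev]
        match_scalars
        · ring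
        · linear_combination Real.sin_sq_add_cos_sq θ
      conv_lhs => rw [← h]
      exact e.symm_apply_apply _
    have hFG : ∀ ω, F θ ω = F 0 (sphereRot e ω) := by
      intro ω
      have hu' := inner_sphereRot e ω uE
      have hv' := inner_sphereRot e ω (B i1)
      simp only [F, Real.cos_zero, Real.sin_zero, one_mul, zero_mul, neg_zero, zero_add,
        add_zero]
      rw [hu', hv', hsymm_u, hsymm_v]
      simp only [inner_add_right, real_inner_smul_right]
    calc ∫ ω, F θ ω ∂σ = ∫ ω, F 0 (sphereRot e ω) ∂σ := by simp only [hFG]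
      _ = ∫ ω, F 0 ω ∂σ := integral_sphereRot σ hσ e _ (hcontF 0).aestronglyMeasurable
  have hK0 : ∫ ω, F' 0 ω ∂σ = 0 := by
    have h1 : (fun x : ℝ => ∫ ω, F x ω ∂σ) = fun _ => ∫ ω, F 0 ω ∂σ := funext hconst
    have h2 := hderiv
    rw [h1] at h2
    exact h2.unique (hasDerivAt_const _ _)
  -- key1 : the integration-by-parts identity in direction B i1
  have int1 : Integrable (fun ω : sphere (0 : EuclideanSpace ℝ (Fin d)) 1 =>
      Real.exp (κ / 2 * ⟪(ω : EuclideanSpace ℝ (Fin d)), uE⟫ ^ 2) *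
        (1 + κ * ⟪(ω : EuclideanSpace ℝ (Fin d)), uE⟫ ^ 2) *
        ⟪(ω : EuclideanSpace ℝ (Fin d)), B i1⟫ ^ 2) σ :=
    sphere_integrable σ
      (((Real.continuous_exp.comp (continuous_const.mul (hcu.pow 2))).mul
        (continuous_const.add (continuous_const.mul (hcu.pow 2)))).mul (hcv.pow 2))
  have int2 : Integrable (fun ω : sphere (0 : EuclideanSpace ℝ (Fin d)) 1 =>
      Real.exp (κ / 2 * ⟪(ω : EuclideanSpace ℝ (Fin d)), uE⟫ ^ 2) *
        ⟪(ω : EuclideanSpace ℝ (Fin d)), uE⟫ *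
        ⟪(ω : EuclideanSpace ℝ (Fin d)), uE⟫) σ :=
    sphere_integrable σ
      (((Real.continuous_exp.comp (continuous_const.mul (hcu.pow 2))).mul hcu).mul hcu)
  have key1 : ∫ ω, Real.exp (κ / 2 * ⟪(ω : EuclideanSpace ℝ (Fin d)), uE⟫ ^ 2) *
        (1 + κ * ⟪(ω : EuclideanSpace ℝ (Fin d)), uE⟫ ^ 2) *
        ⟪(ω : EuclideanSpace ℝ (Fin d)), B i1⟫ ^ 2 ∂σ
      = ∫ ω, Real.exp (κ / 2 * ⟪(ω : EuclideanSpace ℝ (Fin d)), uE⟫ ^ 2) *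
        ⟪(ω : EuclideanSpace ℝ (Fin d)), uE⟫ *
        ⟪(ω : EuclideanSpace ℝ (Fin d)), uE⟫ ∂σ := by
    have hpt : ∀ ω : sphere (0 : EuclideanSpace ℝ (Fin d)) 1, F' 0 ω =
        Real.exp (κ / 2 * ⟪(ω : EuclideanSpace ℝ (Fin d)), uE⟫ ^ 2) *
          (1 + κ * ⟪(ω : EuclideanSpace ℝ (Fin d)), uE⟫ ^ 2) *
          ⟪(ω : EuclideanSpace ℝ (Fin d)), B i1⟫ ^ 2 -
        Real.exp (κ / 2 * ⟪(ω : EuclideanSpace ℝ (Fin d)), uE⟫ ^ 2) *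
          ⟪(ω : EuclideanSpace ℝ (Fin d)), uE⟫ *
          ⟪(ω : EuclideanSpace ℝ (Fin d)), uE⟫ := by
      intro ω
      simp only [F', Real.cos_zero, Real.sin_zero, one_mul, zero_mul, neg_zero, zero_add,
        add_zero]
    rw [funext hpt, integral_sub int1 int2] at hK0
    linarith
  -- key2 : symmetry among the directions orthogonal to u
  have key2 : ∀ i : Fin d, i ≠ i0 →
      (∫ ω, Real.exp (κ / 2 * ⟪(ω : EuclideanSpace ℝ (Fin d)), uE⟫ ^ 2) *
        (1 + κ * ⟪(ω : EuclideanSpace ℝ (Fin d)), uE⟫ ^ 2) *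
        ⟪(ω : EuclideanSpace ℝ (Fin d)), B i⟫ ^ 2 ∂σ)
      = ∫ ω, Real.exp (κ / 2 * ⟪(ω : EuclideanSpace ℝ (Fin d)), uE⟫ ^ 2) *
        (1 + κ * ⟪(ω : EuclideanSpace ℝ (Fin d)), uE⟫ ^ 2) *
        ⟪(ω : EuclideanSpace ℝ (Fin d)), B i1⟫ ^ 2 ∂σ := by
    intro i hi
    set e := (B.repr.trans (LinearIsometryEquiv.piLpCongrLeft 2 ℝ ℝ (Equiv.swap i1 i))).trans
      B.repr.symm with he_def
    have he : ∀ j, e (B j) = B (Equiv.swap i1 i j) := by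
      intro j
      apply B.repr.injective
      simp only [he_def, LinearIsometryEquiv.trans_apply, OrthonormalBasis.repr_self,
        LinearIsometryEquiv.apply_symm_apply]
      rw [EuclideanSpace.piLpCongrLeft_single]
    have heu2 : e uE = uE := by
      rw [← hBu, he, Equiv.swap_apply_of_ne_of_ne hi01 (Ne.symm hi)]
    have hsu : e.symm uE = uE := by
      conv_lhs => rw [← heu2]
      exact e.symm_apply_apply _
    have hsv2 : e.symm (B i) = B i1 := by
      have h2 : e (B i1) = B i := by
        rw [he, Equiv.swap_apply_left]
      conv_lhs => rw [← h2]
      exact e.symm_apply_apply _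
    have hconti : Continuous (fun ω : sphere (0 : EuclideanSpace ℝ (Fin d)) 1 =>
        Real.exp (κ / 2 * ⟪(ω : EuclideanSpace ℝ (Fin d)), uE⟫ ^ 2) *
          (1 + κ * ⟪(ω : EuclideanSpace ℝ (Fin d)), uE⟫ ^ 2) *
          ⟪(ω : EuclideanSpace ℝ (Fin d)), B i⟫ ^ 2) :=
      ((Real.continuous_exp.comp (continuous_const.mul (hcu.pow 2))).mul
        (continuous_const.add (continuous_const.mul (hcu.pow 2)))).mul
        ((continuous_innerS (B i)).pow 2)
    have hFG : ∀ ω : sphere (0 : EuclideanSpace ℝ (Fin d)) 1,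
        Real.exp (κ / 2 * ⟪(ω : EuclideanSpace ℝ (Fin d)), uE⟫ ^ 2) *
          (1 + κ * ⟪(ω : EuclideanSpace ℝ (Fin d)), uE⟫ ^ 2) *
          ⟪(ω : EuclideanSpace ℝ (Fin d)), B i1⟫ ^ 2
        = Real.exp (κ / 2 * ⟪((sphereRot e ω : sphere (0 : EuclideanSpace ℝ (Fin d)) 1) :
            EuclideanSpace ℝ (Fin d)), uE⟫ ^ 2) *
          (1 + κ * ⟪((sphereRot e ω : sphere (0 : EuclideanSpace ℝ (Fin d)) 1) :
            EuclideanSpace ℝ (Fin d)), uE⟫ ^ 2) *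
          ⟪((sphereRot e ω : sphere (0 : EuclideanSpace ℝ (Fin d)) 1) :
            EuclideanSpace ℝ (Fin d)), B i⟫ ^ 2 := by
      intro ω
      rw [inner_sphereRot, inner_sphereRot, hsu, hsv2]
    refine Eq.symm ?_
    calc ∫ ω, Real.exp (κ / 2 * ⟪(ω : EuclideanSpace ℝ (Fin d)), uE⟫ ^ 2) *
          (1 + κ * ⟪(ω : EuclideanSpace ℝ (Fin d)), uE⟫ ^ 2) *
          ⟪(ω : EuclideanSpace ℝ (Fin d)), B i1⟫ ^ 2 ∂σ
        = ∫ ω, Real.exp (κ / 2 * ⟪((sphereRot e ω : sphere (0 : EuclideanSpace ℝ (Fin d)) 1) :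
            EuclideanSpace ℝ (Fin d)), uE⟫ ^ 2) *
          (1 + κ * ⟪((sphereRot e ω : sphere (0 : EuclideanSpace ℝ (Fin d)) 1) :
            EuclideanSpace ℝ (Fin d)), uE⟫ ^ 2) *
          ⟪((sphereRot e ω : sphere (0 : EuclideanSpace ℝ (Fin d)) 1) :
            EuclideanSpace ℝ (Fin d)), B i⟫ ^ 2 ∂σ := by simp only [hFG]
      _ = ∫ ω, Real.exp (κ / 2 * ⟪(ω : EuclideanSpace ℝ (Fin d)), uE⟫ ^ 2) *
          (1 + κ * ⟪(ω : EuclideanSpace ℝ (Fin d)), uE⟫ ^ 2) *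
          ⟪(ω : EuclideanSpace ℝ (Fin d)), B i⟫ ^ 2 ∂σ :=
        integral_sphereRot σ hσ e _ hconti.aestronglyMeasurable
  -- key3 : decomposition of the constant function 1
  have key3 : ∀ ω : sphere (0 : EuclideanSpace ℝ (Fin d)) 1,
      ∑ j : Fin d, ⟪(ω : EuclideanSpace ℝ (Fin d)), B j⟫ ^ 2 = 1 := by
    intro ω
    have hω : ‖(ω : EuclideanSpace ℝ (Fin d))‖ = 1 := by
      have := ω.2; rwa [mem_sphere_zero_iff_norm] at this
    have h := B.sum_inner_mul_inner (ω : EuclideanSpace ℝ (Fin d)) (ω : EuclideanSpace ℝ (Fin d))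
    calc ∑ j : Fin d, ⟪(ω : EuclideanSpace ℝ (Fin d)), B j⟫ ^ 2
        = ∑ j : Fin d, ⟪(ω : EuclideanSpace ℝ (Fin d)), B j⟫ *
            ⟪B j, (ω : EuclideanSpace ℝ (Fin d))⟫ := by
          refine Finset.sum_congr rfl fun j _ => ?_
          rw [real_inner_comm (B j) (ω : EuclideanSpace ℝ (Fin d))]
          ring
      _ = ⟪(ω : EuclideanSpace ℝ (Fin d)), (ω : EuclideanSpace ℝ (Fin d))⟫ := h
      _ = 1 := by rw [real_inner_self_eq_norm_sq, hω]; norm_num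
  have herase : ∀ ω : sphere (0 : EuclideanSpace ℝ (Fin d)) 1,
      ∑ j ∈ Finset.univ.erase i0, ⟪(ω : EuclideanSpace ℝ (Fin d)), B j⟫ ^ 2
      = 1 - ⟪(ω : EuclideanSpace ℝ (Fin d)), uE⟫ ^ 2 := by
    intro ω
    have h := Finset.sum_erase_add Finset.univ
      (fun j => ⟪(ω : EuclideanSpace ℝ (Fin d)), B j⟫ ^ 2) (Finset.mem_univ i0)
    rw [key3 ω] at h
    rw [← hBu]
    linarith
  have hint : ∀ j : Fin d, Integrable (fun ω : sphere (0 : EuclideanSpace ℝ (Fin d)) 1 =>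
      Real.exp (κ / 2 * ⟪(ω : EuclideanSpace ℝ (Fin d)), uE⟫ ^ 2) *
        (1 + κ * ⟪(ω : EuclideanSpace ℝ (Fin d)), uE⟫ ^ 2) *
        ⟪(ω : EuclideanSpace ℝ (Fin d)), B j⟫ ^ 2) σ := fun j =>
    sphere_integrable σ
      (((Real.continuous_exp.comp (continuous_const.mul (hcu.pow 2))).mul
        (continuous_const.add (continuous_const.mul (hcu.pow 2)))).mul
        ((continuous_innerS (B j)).pow 2))
  have hpt2 : ∀ ω : sphere (0 : EuclideanSpace ℝ (Fin d)) 1,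
      Real.exp (κ / 2 * ⟪(ω : EuclideanSpace ℝ (Fin d)), uE⟫ ^ 2) *
        ((1 - ⟪(ω : EuclideanSpace ℝ (Fin d)), uE⟫ ^ 2) *
          (1 + κ * ⟪(ω : EuclideanSpace ℝ (Fin d)), uE⟫ ^ 2))
      = ∑ j ∈ Finset.univ.erase i0,
          Real.exp (κ / 2 * ⟪(ω : EuclideanSpace ℝ (Fin d)), uE⟫ ^ 2) *
            (1 + κ * ⟪(ω : EuclideanSpace ℝ (Fin d)), uE⟫ ^ 2) *
            ⟪(ω : EuclideanSpace ℝ (Fin d)), B j⟫ ^ 2 := by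
    intro ω
    rw [← herase ω, Finset.sum_mul, Finset.mul_sum]
    exact Finset.sum_congr rfl fun j _ => by ring
  have hcount : (((Finset.univ.erase i0).card : ℕ) : ℝ) = (d : ℝ) - 1 := by
    rw [Finset.card_erase_of_mem (Finset.mem_univ _), Finset.card_univ, Fintype.card_fin,
      Nat.cast_sub hd0, Nat.cast_one]
  calc ((d : ℝ) - 1) * ∫ ω, Real.exp (κ / 2 * ⟪(ω : EuclideanSpace ℝ (Fin d)), uE⟫ ^ 2) *
        ⟪(ω : EuclideanSpace ℝ (Fin d)), uE⟫ ^ 2 ∂σ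
      = ((d : ℝ) - 1) * ∫ ω, Real.exp (κ / 2 * ⟪(ω : EuclideanSpace ℝ (Fin d)), uE⟫ ^ 2) *
          ⟪(ω : EuclideanSpace ℝ (Fin d)), uE⟫ * ⟪(ω : EuclideanSpace ℝ (Fin d)), uE⟫ ∂σ := by
        congr 1
        exact integral_congr_ae (Filter.Eventually.of_forall fun ω => by ring)
    _ = ((d : ℝ) - 1) * ∫ ω, Real.exp (κ / 2 * ⟪(ω : EuclideanSpace ℝ (Fin d)), uE⟫ ^ 2) *
          (1 + κ * ⟪(ω : EuclideanSpace ℝ (Fin d)), uE⟫ ^ 2) *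
          ⟪(ω : EuclideanSpace ℝ (Fin d)), B i1⟫ ^ 2 ∂σ := by rw [key1]
    _ = ∑ j ∈ Finset.univ.erase i0,
          ∫ ω, Real.exp (κ / 2 * ⟪(ω : EuclideanSpace ℝ (Fin d)), uE⟫ ^ 2) *
            (1 + κ * ⟪(ω : EuclideanSpace ℝ (Fin d)), uE⟫ ^ 2) *
            ⟪(ω : EuclideanSpace ℝ (Fin d)), B j⟫ ^ 2 ∂σ := by
        rw [Finset.sum_congr rfl (fun j hj => key2 j (Finset.ne_of_mem_erase hj)),
          Finset.sum_const, nsmul_eq_mul, hcount]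
    _ = ∫ ω, (∑ j ∈ Finset.univ.erase i0,
          Real.exp (κ / 2 * ⟪(ω : EuclideanSpace ℝ (Fin d)), uE⟫ ^ 2) *
            (1 + κ * ⟪(ω : EuclideanSpace ℝ (Fin d)), uE⟫ ^ 2) *
            ⟪(ω : EuclideanSpace ℝ (Fin d)), B j⟫ ^ 2) ∂σ :=
        (integral_finset_sum _ (fun j _ => hint j)).symm
    _ = ∫ ω, Real.exp (κ / 2 * ⟪(ω : EuclideanSpace ℝ (Fin d)), uE⟫ ^ 2) *
          ((1 - ⟪(ω : EuclideanSpace ℝ (Fin d)), uE⟫ ^ 2) *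
            (1 + κ * ⟪(ω : EuclideanSpace ℝ (Fin d)), uE⟫ ^ 2)) ∂σ := by
        simp only [← hpt2]
end
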